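/- arXiv:1206.2535 — 11 statements merged into one kernel-verified Lean document; each statement's English description precedes it below -/
import Mathlib

section
/- The set of integer vectors x ∈ ℤ⁹ that satisfy the hexagon relations and have ∂(x) = (0,0,0) is exactly the set of integer multiples of v; that is, {x ∈ ℤ⁹ : a₂+a₃ = b₃+c₂, b₂+b₃ = c₃+a₂, c₂+c₃ = a₃+b₂, ∂(x) = 0} = {ℓ·v : ℓ ∈ ℤ}. -/
/-- The hexagon relations on a point of `ℤ⁹` with coordinates
`(a₁,b₁,c₁,a₂,a₃,b₂,b₃,c₂,c₃)` (indices `0,…,8`):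
`a₂+a₃ = b₃+c₂`, `b₂+b₃ = c₃+a₂`, `c₂+c₃ = a₃+b₂`. -/
def hex (x : Fin 9 → ℤ) : Prop :=
  x 3 + x 4 = x 6 + x 7 ∧ x 5 + x 6 = x 8 + x 3 ∧ x 7 + x 8 = x 4 + x 5

/-- The boundary map `∂ : ℤ⁹ → (ℤ²)³`,
`∂(Q) = ((a₁+a₂, a₃+b₁), (b₁+b₂, b₃+c₁), (c₁+c₂, c₃+a₁))`. -/
def bd (x : Fin 9 → ℤ) : Fin 3 → ℤ × ℤ :=
  ![(x 0 + x 3, x 4 + x 1), (x 1 + x 5, x 6 + x 2), (x 2 + x 7, x 8 + x 0)]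

/-- The vector `v` with all corner entries `1` and all hexagon entries `-1`. -/
def vtri : Fin 9 → ℤ := ![1, 1, 1, -1, -1, -1, -1, -1, -1]

@[simp] lemma vtri0 : vtri 0 = 1 := rfl
@[simp] lemma vtri1 : vtri 1 = 1 := rfl
@[simp] lemma vtri2 : vtri 2 = 1 := rfl
@[simp] lemma vtri3 : vtri 3 = -1 := rfl
@[simp] lemma vtri4 : vtri 4 = -1 := rfl
@[simp] lemma vtri5 : vtri 5 = -1 := rfl
@[simp] lemma vtri6 : vtri 6 = -1 := rfl
@[simp] lemma vtri7 : vtri 7 = -1 := rfl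
@[simp] lemma vtri8 : vtri 8 = -1 := rfl

/-- The set of integer vectors satisfying the hexagon relations with `∂(x) = 0`
is exactly the set of integer multiples of `v`. -/
theorem stmt_0 :
    {x : Fin 9 → ℤ | hex x ∧ ∀ i, bd x i = 0} = {x : Fin 9 → ℤ | ∃ ℓ : ℤ, x = ℓ • vtri} := by
  ext x
  simp only [Set.mem_setOf_eq]
  constructor
  · rintro ⟨⟨h1, h2, h3⟩, hb⟩
    have b0 := hb 0
    have b1 := hb 1
    have b2 := hb 2
    simp only [bd, Matrix.cons_val_zero, Matrix.cons_val_one, Matrix.head_cons,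
      Prod.ext_iff, Prod.fst_zero, Prod.snd_zero, Matrix.cons_val_two, Matrix.tail_cons] at b0 b1 b2
    obtain ⟨e0, e1⟩ := b0
    obtain ⟨e2, e3⟩ := b1
    obtain ⟨e4, e5⟩ := b2
    refine ⟨x 0, ?_⟩
    funext i
    fin_cases i <;> simp <;> omega
  · rintro ⟨l, rfl⟩
    refine ⟨⟨by simp, by simp, by simp⟩, fun i => ?_⟩
    fin_cases i <;> simp [bd]
end

section
/- If Q and Q′ are two BZ triangles with ∂(Q) = ∂(Q′), then Q′ − Q = ℓ·v for some integer ℓ; i.e., all BZ triangles with a fixed boundary are related to each other by adding or subtracting integer multiples of v. -/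
/-- A BZ triangle: a point of `ℕ⁹` (all entries nonnegative) satisfying the
hexagon relations. -/
def isBZ (x : Fin 9 → ℤ) : Prop := (∀ i, 0 ≤ x i) ∧ hex x

/-- Any two BZ triangles with the same boundary differ by an integer multiple of `v`. -/
theorem stmt_1 (Q Q' : Fin 9 → ℤ) (hQ : isBZ Q) (hQ' : isBZ Q')
    (h : bd Q = bd Q') : ∃ ℓ : ℤ, Q' - Q = ℓ • vtri := by
  obtain ⟨_, h1, h2, h3⟩ := hQ
  obtain ⟨_, h1', h2', h3'⟩ := hQ'
  have e0 := congrFun h 0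
  have e1 := congrFun h 1
  have e2 := congrFun h 2
  simp only [bd, Matrix.cons_val_zero, Matrix.cons_val_one, Matrix.head_cons,
    Matrix.cons_val_two, Matrix.tail_cons, Prod.mk.injEq] at e0 e1 e2
  obtain ⟨e0a, e0b⟩ := e0
  obtain ⟨e1a, e1b⟩ := e1
  obtain ⟨e2a, e2b⟩ := e2
  refine ⟨Q' 0 - Q 0, ?_⟩
  have hv : ∀ i : Fin 9, vtri i = if (i : ℕ) < 3 then 1 else -1 := by decide
  funext i
  fin_cases i <;> simp [hv] <;> omega
end

section
/- For every BZ triangle Q there exists a unique BZ triangle Q_min with ∂(Q_min) = ∂(Q) such that at least one corner entry of Q_min is equal to 0. -/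
/-- For every BZ triangle `Q` there is a unique BZ triangle with the same boundary
having at least one corner entry (`a₁`, `b₁` or `c₁`) equal to `0`. -/
theorem stmt_2 (Q : Fin 9 → ℤ) (hQ : isBZ Q) :
    ∃! Qmin : Fin 9 → ℤ, isBZ Qmin ∧ bd Qmin = bd Q ∧
      (Qmin 0 = 0 ∨ Qmin 1 = 0 ∨ Qmin 2 = 0) := by
  obtain ⟨hpos, hx1, hx2, hx3⟩ := hQ
  have p0 := hpos 0; have p1 := hpos 1; have p2 := hpos 2
  have p3 := hpos 3; have p4 := hpos 4; have p5 := hpos 5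
  have p6 := hpos 6; have p7 := hpos 7; have p8 := hpos 8
  set m := min (Q 0) (min (Q 1) (Q 2)) with hm
  have hm0 : 0 ≤ m := by omega
  refine ⟨![Q 0 - m, Q 1 - m, Q 2 - m, Q 3 + m, Q 4 + m, Q 5 + m, Q 6 + m, Q 7 + m, Q 8 + m], ⟨⟨?_, ?_, ?_, ?_⟩, ?_, ?_⟩, ?_⟩
  · intro i
    fin_cases i
    · show 0 ≤ Q 0 - m; omega
    · show 0 ≤ Q 1 - m; omega
    · show 0 ≤ Q 2 - m; omega
    · show 0 ≤ Q 3 + m; omega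
    · show 0 ≤ Q 4 + m; omega
    · show 0 ≤ Q 5 + m; omega
    · show 0 ≤ Q 6 + m; omega
    · show 0 ≤ Q 7 + m; omega
    · show 0 ≤ Q 8 + m; omega
  · show Q 3 + m + (Q 4 + m) = Q 6 + m + (Q 7 + m); omega
  · show Q 5 + m + (Q 6 + m) = Q 8 + m + (Q 3 + m); omega
  · show Q 7 + m + (Q 8 + m) = Q 4 + m + (Q 5 + m); omega
  · funext i
    fin_cases i
    · show (Q 0 - m + (Q 3 + m), Q 4 + m + (Q 1 - m)) = (Q 0 + Q 3, Q 4 + Q 1)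
      simp [Prod.ext_iff]
    · show (Q 1 - m + (Q 5 + m), Q 6 + m + (Q 2 - m)) = (Q 1 + Q 5, Q 6 + Q 2)
      simp [Prod.ext_iff]
    · show (Q 2 - m + (Q 7 + m), Q 8 + m + (Q 0 - m)) = (Q 2 + Q 7, Q 8 + Q 0)
      simp [Prod.ext_iff]
  · show Q 0 - m = 0 ∨ Q 1 - m = 0 ∨ Q 2 - m = 0; omega
  · rintro y ⟨⟨ypos, yh1, yh2, yh3⟩, ybd, ycorner⟩
    have q0 := ypos 0; have q1 := ypos 1; have q2 := ypos 2
    have q3 := ypos 3; have q4 := ypos 4; have q5 := ypos 5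
    have q6 := ypos 6; have q7 := ypos 7; have q8 := ypos 8
    have e0a : y 0 + y 3 = Q 0 + Q 3 := congrArg Prod.fst (congrFun ybd 0)
    have e0b : y 4 + y 1 = Q 4 + Q 1 := congrArg Prod.snd (congrFun ybd 0)
    have e1a : y 1 + y 5 = Q 1 + Q 5 := congrArg Prod.fst (congrFun ybd 1)
    have e1b : y 6 + y 2 = Q 6 + Q 2 := congrArg Prod.snd (congrFun ybd 1)
    have e2a : y 2 + y 7 = Q 2 + Q 7 := congrArg Prod.fst (congrFun ybd 2)
    have e2b : y 8 + y 0 = Q 8 + Q 0 := congrArg Prod.snd (congrFun ybd 2)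
    funext i
    fin_cases i
    · show y 0 = Q 0 - m; omega
    · show y 1 = Q 1 - m; omega
    · show y 2 = Q 2 - m; omega
    · show y 3 = Q 3 + m; omega
    · show y 4 = Q 4 + m; omega
    · show y 5 = Q 5 + m; omega
    · show y 6 = Q 6 + m; omega
    · show y 7 = Q 7 + m; omega
    · show y 8 = Q 8 + m; omega
end

section
/- Let Q be a BZ triangle, let Q_min be the unique BZ triangle with ∂(Q_min) = ∂(Q) having some corner entry equal to 0, and let m be the minimum of the six hexagon entries of Q_min. Then {Q′ ∈ BZ₃ : ∂(Q′) = ∂(Q)} = {Q_min + ℓ·v : ℓ ∈ ℕ, 0 ≤ ℓ ≤ m}; in particular this set is finite with exactly m+1 elements. -/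
/-- If `Q_min` is the BZ triangle with boundary `∂(Q)` having a zero corner entry,
and `m` is the minimum of its six hexagon entries, then the fiber of `∂` over `∂(Q)`
in the monoid of BZ triangles is `{Q_min + ℓ·v : 0 ≤ ℓ ≤ m}`, a finite set with
exactly `m + 1` elements. -/
theorem stmt_3 (Q Qmin : Fin 9 → ℤ) (hQ : isBZ Q) (hQmin : isBZ Qmin)
    (hbd : bd Qmin = bd Q)
    (hcorner : Qmin 0 = 0 ∨ Qmin 1 = 0 ∨ Qmin 2 = 0)
    (m : ℤ)
    (hm : m = min (Qmin 3) (min (Qmin 4) (min (Qmin 5) (min (Qmin 6)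
      (min (Qmin 7) (Qmin 8)))))) :
    {Q' : Fin 9 → ℤ | isBZ Q' ∧ bd Q' = bd Q} =
      {Q' : Fin 9 → ℤ | ∃ ℓ : ℤ, 0 ≤ ℓ ∧ ℓ ≤ m ∧ Q' = Qmin + ℓ • vtri} ∧
    {Q' : Fin 9 → ℤ | isBZ Q' ∧ bd Q' = bd Q}.Finite ∧
    ({Q' : Fin 9 → ℤ | isBZ Q' ∧ bd Q' = bd Q}.ncard : ℤ) = m + 1 := by
  have hv : ∀ i : Fin 9, vtri i = if (i : ℕ) < 3 then 1 else -1 := by decide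
  obtain ⟨hMpos, hMhex⟩ := hQmin
  have hm0 : 0 ≤ m := by
    rw [hm]
    exact le_min (hMpos 3) (le_min (hMpos 4) (le_min (hMpos 5) (le_min (hMpos 6)
      (le_min (hMpos 7) (hMpos 8)))))
  have hm3 : m ≤ Qmin 3 := by rw [hm]; exact min_le_left _ _
  have hm4 : m ≤ Qmin 4 := by
    rw [hm]; exact le_trans (min_le_right _ _) (min_le_left _ _)
  have hm5 : m ≤ Qmin 5 := by
    rw [hm]
    exact le_trans (min_le_right _ _) (le_trans (min_le_right _ _) (min_le_left _ _))
  have hm6 : m ≤ Qmin 6 := by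
    rw [hm]
    exact le_trans (min_le_right _ _) (le_trans (min_le_right _ _)
      (le_trans (min_le_right _ _) (min_le_left _ _)))
  have hm7 : m ≤ Qmin 7 := by
    rw [hm]
    exact le_trans (min_le_right _ _) (le_trans (min_le_right _ _)
      (le_trans (min_le_right _ _) (le_trans (min_le_right _ _) (min_le_left _ _))))
  have hm8 : m ≤ Qmin 8 := by
    rw [hm]
    exact le_trans (min_le_right _ _) (le_trans (min_le_right _ _)
      (le_trans (min_le_right _ _) (le_trans (min_le_right _ _) (min_le_right _ _))))
  -- the key set equality
  have hset : {Q' : Fin 9 → ℤ | isBZ Q' ∧ bd Q' = bd Q} =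
      {Q' : Fin 9 → ℤ | ∃ ℓ : ℤ, 0 ≤ ℓ ∧ ℓ ≤ m ∧ Q' = Qmin + ℓ • vtri} := by
    ext Q'
    simp only [Set.mem_setOf_eq]
    constructor
    · rintro ⟨⟨hpos, hhex⟩, hb⟩
      have hb' : bd Q' = bd Qmin := by rw [hb, hbd]
      have e0 := congrArg Prod.fst (congrFun hb' 0)
      have e1 := congrArg Prod.snd (congrFun hb' 0)
      have e2 := congrArg Prod.fst (congrFun hb' 1)
      have e3 := congrArg Prod.snd (congrFun hb' 1)
      have e4 := congrArg Prod.fst (congrFun hb' 2)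
      have e5 := congrArg Prod.snd (congrFun hb' 2)
      simp only [bd, Matrix.cons_val_zero, Matrix.cons_val_one, Matrix.head_cons,
        Matrix.cons_val_two, Matrix.tail_cons] at e0 e1 e2 e3 e4 e5
      obtain ⟨h1, h2, h3⟩ := hhex
      obtain ⟨g1, g2, g3⟩ := hMhex
      refine ⟨Q' 0 - Qmin 0, ?_, ?_, ?_⟩
      · rcases hcorner with hc | hc | hc
        · have := hpos 0; omega
        · have := hpos 1; omega
        · have := hpos 2; omega
      · rw [hm]
        have p3 := hpos 3
        have p4 := hpos 4
        have p5 := hpos 5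
        have p6 := hpos 6
        have p7 := hpos 7
        have p8 := hpos 8
        simp only [le_min_iff]
        omega
      · have w : ∀ k : Fin 9, (Qmin + (Q' 0 - Qmin 0) • vtri) k
            = Qmin k + (Q' 0 - Qmin 0) * vtri k := fun k => rfl
        have k0 : Q' 0 = (Qmin + (Q' 0 - Qmin 0) • vtri) 0 := by
          rw [w 0]; simp only [hv]; norm_num; try omega
        have k1 : Q' 1 = (Qmin + (Q' 0 - Qmin 0) • vtri) 1 := by
          rw [w 1]; simp only [hv]; norm_num; try omega
        have k2 : Q' 2 = (Qmin + (Q' 0 - Qmin 0) • vtri) 2 := by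
          rw [w 2]; simp only [hv]; norm_num; try omega
        have k3 : Q' 3 = (Qmin + (Q' 0 - Qmin 0) • vtri) 3 := by
          rw [w 3]; simp only [hv]; norm_num; try omega
        have k4 : Q' 4 = (Qmin + (Q' 0 - Qmin 0) • vtri) 4 := by
          rw [w 4]; simp only [hv]; norm_num; try omega
        have k5 : Q' 5 = (Qmin + (Q' 0 - Qmin 0) • vtri) 5 := by
          rw [w 5]; simp only [hv]; norm_num; try omega
        have k6 : Q' 6 = (Qmin + (Q' 0 - Qmin 0) • vtri) 6 := by
          rw [w 6]; simp only [hv]; norm_num; try omega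
        have k7 : Q' 7 = (Qmin + (Q' 0 - Qmin 0) • vtri) 7 := by
          rw [w 7]; simp only [hv]; norm_num; try omega
        have k8 : Q' 8 = (Qmin + (Q' 0 - Qmin 0) • vtri) 8 := by
          rw [w 8]; simp only [hv]; norm_num; try omega
        funext i
        fin_cases i
        exacts [k0, k1, k2, k3, k4, k5, k6, k7, k8]
    · rintro ⟨ℓ, h0, h1, rfl⟩
      obtain ⟨g1, g2, g3⟩ := hMhex
      refine ⟨⟨?_, ?_, ?_, ?_⟩, ?_⟩
      · have w : ∀ k : Fin 9, (Qmin + ℓ • vtri) k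
            = Qmin k + ℓ * vtri k := fun k => rfl
        have q0 : 0 ≤ (Qmin + ℓ • vtri) 0 := by
          have := hMpos 0; rw [w 0]; simp only [hv]; norm_num; try omega
        have q1 : 0 ≤ (Qmin + ℓ • vtri) 1 := by
          have := hMpos 1; rw [w 1]; simp only [hv]; norm_num; try omega
        have q2 : 0 ≤ (Qmin + ℓ • vtri) 2 := by
          have := hMpos 2; rw [w 2]; simp only [hv]; norm_num; try omega
        have q3 : 0 ≤ (Qmin + ℓ • vtri) 3 := by
          have := hMpos 3; rw [w 3]; simp only [hv]; norm_num; try omega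
        have q4 : 0 ≤ (Qmin + ℓ • vtri) 4 := by
          have := hMpos 4; rw [w 4]; simp only [hv]; norm_num; try omega
        have q5 : 0 ≤ (Qmin + ℓ • vtri) 5 := by
          have := hMpos 5; rw [w 5]; simp only [hv]; norm_num; try omega
        have q6 : 0 ≤ (Qmin + ℓ • vtri) 6 := by
          have := hMpos 6; rw [w 6]; simp only [hv]; norm_num; try omega
        have q7 : 0 ≤ (Qmin + ℓ • vtri) 7 := by
          have := hMpos 7; rw [w 7]; simp only [hv]; norm_num; try omega
        have q8 : 0 ≤ (Qmin + ℓ • vtri) 8 := by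
          have := hMpos 8; rw [w 8]; simp only [hv]; norm_num; try omega
        intro i
        fin_cases i
        exacts [q0, q1, q2, q3, q4, q5, q6, q7, q8]
      · simp only [Pi.add_apply, Pi.smul_apply, smul_eq_mul, hv]
        norm_num
        omega
      · simp only [Pi.add_apply, Pi.smul_apply, smul_eq_mul, hv]
        norm_num
        omega
      · simp only [Pi.add_apply, Pi.smul_apply, smul_eq_mul, hv]
        norm_num
        omega
      · rw [← hbd]
        funext j
        fin_cases j <;>
          simp only [bd, Pi.add_apply, Pi.smul_apply, smul_eq_mul, hv,
            Matrix.cons_val_zero, Matrix.cons_val_one, Matrix.head_cons,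
            Matrix.cons_val_two, Matrix.tail_cons, Prod.mk.injEq, Fin.isValue] <;>
          norm_num <;> omega
  have hinj : Function.Injective (fun ℓ : ℤ => Qmin + ℓ • vtri) := by
    intro a b hab
    have := congrFun hab 0
    simp only [Pi.add_apply, Pi.smul_apply, smul_eq_mul, hv] at this
    norm_num at this
    omega
  have himg : {Q' : Fin 9 → ℤ | ∃ ℓ : ℤ, 0 ≤ ℓ ∧ ℓ ≤ m ∧ Q' = Qmin + ℓ • vtri} =
      (fun ℓ : ℤ => Qmin + ℓ • vtri) '' Set.Icc 0 m := by
    ext Q'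
    simp only [Set.mem_setOf_eq, Set.mem_image, Set.mem_Icc]
    constructor
    · rintro ⟨ℓ, h0, h1, rfl⟩; exact ⟨ℓ, ⟨h0, h1⟩, rfl⟩
    · rintro ⟨ℓ, ⟨h0, h1⟩, rfl⟩; exact ⟨ℓ, h0, h1, rfl⟩
  refine ⟨hset, ?_, ?_⟩
  · rw [hset, himg]
    exact (Set.finite_Icc 0 m).image _
  · rw [hset, himg, Set.ncard_image_of_injective _ hinj]
    rw [show (Set.Icc (0:ℤ) m) = ↑(Finset.Icc (0:ℤ) m) by simp]
    rw [Set.ncard_coe_finset, Int.card_Icc]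
    omega
end

section
/- The additive monoid BZ₃ is generated by the eight elements P₁₃, P₂₁, P₃₂, S, T, P₁₂, P₂₃, P₃₁; that is, every BZ triangle is a finite sum (with nonnegative integer multiplicities) of these eight elements. -/
/-- The eight generators `P₁₃, P₂₁, P₃₂, S, T, P₁₂, P₂₃, P₃₁` of the monoid `BZ₃`
(coordinates ordered `(a₁,b₁,c₁,a₂,a₃,b₂,b₃,c₂,c₃)`):
`P₁₃ = e_{a₁}`, `P₂₁ = e_{b₁}`, `P₃₂ = e_{c₁}`, `S = e_{a₂}+e_{b₂}+e_{c₂}`,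
`T = e_{a₃}+e_{b₃}+e_{c₃}`, `P₁₂ = e_{a₂}+e_{b₃}`, `P₂₃ = e_{b₂}+e_{c₃}`,
`P₃₁ = e_{c₂}+e_{a₃}`. -/
def bzGens : Fin 8 → Fin 9 → ℤ :=
  ![![1, 0, 0, 0, 0, 0, 0, 0, 0],  -- P₁₃
    ![0, 1, 0, 0, 0, 0, 0, 0, 0],  -- P₂₁
    ![0, 0, 1, 0, 0, 0, 0, 0, 0],  -- P₃₂
    ![0, 0, 0, 1, 0, 1, 0, 1, 0],  -- S
    ![0, 0, 0, 0, 1, 0, 1, 0, 1],  -- T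
    ![0, 0, 0, 1, 0, 0, 1, 0, 0],  -- P₁₂
    ![0, 0, 0, 0, 0, 1, 0, 0, 1],  -- P₂₃
    ![0, 0, 0, 0, 1, 0, 0, 1, 0]]  -- P₃₁


private lemma vec9_5 (a b c d e f g h i : ℤ) : ![a,b,c,d,e,f,g,h,i] 5 = f := rfl
private lemma vec9_6 (a b c d e f g h i : ℤ) : ![a,b,c,d,e,f,g,h,i] 6 = g := rfl
private lemma vec9_7 (a b c d e f g h i : ℤ) : ![a,b,c,d,e,f,g,h,i] 7 = h := rfl
private lemma vec9_8 (a b c d e f g h i : ℤ) : ![a,b,c,d,e,f,g,h,i] 8 = i := rfl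

/-- Every BZ triangle is a sum with nonnegative integer multiplicities of the
eight elements `P₁₃, P₂₁, P₃₂, S, T, P₁₂, P₂₃, P₃₁`. -/
theorem stmt_4 (Q : Fin 9 → ℤ) (hQ : isBZ Q) :
    ∃ n : Fin 8 → ℕ, Q = ∑ i : Fin 8, (n i : ℤ) • bzGens i := by

  obtain ⟨hpos, h1, h2, h3⟩ := hQ
  have h0 := hpos 0; have hh1 := hpos 1; have hh2 := hpos 2
  have hh3 := hpos 3; have hh4 := hpos 4; have hh5 := hpos 5
  have hh6 := hpos 6; have hh7 := hpos 7; have hh8 := hpos 8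
  set s : ℤ := min (Q 3) (min (Q 5) (Q 7)) with hs
  refine ⟨![(Q 0).toNat, (Q 1).toNat, (Q 2).toNat, s.toNat,
    (Q 6 - Q 3 + s).toNat, (Q 3 - s).toNat, (Q 5 - s).toNat, (Q 7 - s).toNat], ?_⟩
  have hsle3 : s ≤ Q 3 := min_le_left _ _
  have hsle5 : s ≤ Q 5 := le_trans (min_le_right _ _) (min_le_left _ _)
  have hsle7 : s ≤ Q 7 := le_trans (min_le_right _ _) (min_le_right _ _)
  have hscases : s = Q 3 ∨ s = Q 5 ∨ s = Q 7 := by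
    rcases min_cases (Q 3) (min (Q 5) (Q 7)) with h | h <;>
      rcases min_cases (Q 5) (Q 7) with h' | h' <;> omega
  funext i
  fin_cases i <;>
    simp [bzGens, Fin.sum_univ_succ, vec9_5, vec9_6, vec9_7, vec9_8] <;>
    omega
end

section
/- For a BZ triangle Q, the set {Q′ ∈ BZ₃ : ∂(Q′) = ∂(Q)} has exactly one element if and only if it contains a BZ triangle having some corner entry equal to 0 and some hexagon entry equal to 0. -/
/-- Shift a point along the kernel direction `(1,1,1,-1,…,-1)`. -/
def shiftBZ (Q : Fin 9 → ℤ) (t : ℤ) : Fin 9 → ℤ :=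
  ![Q 0 + t, Q 1 + t, Q 2 + t, Q 3 - t, Q 4 - t, Q 5 - t, Q 6 - t, Q 7 - t, Q 8 - t]

lemma fiber_struct (Q Q' : Fin 9 → ℤ) (h : hex Q) (h' : hex Q')
    (hb : bd Q' = bd Q) :
    ∃ t : ℤ, Q' 0 = Q 0 + t ∧ Q' 1 = Q 1 + t ∧ Q' 2 = Q 2 + t ∧
      Q' 3 = Q 3 - t ∧ Q' 4 = Q 4 - t ∧ Q' 5 = Q 5 - t ∧
      Q' 6 = Q 6 - t ∧ Q' 7 = Q 7 - t ∧ Q' 8 = Q 8 - t := by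
  obtain ⟨h1, h2, h3⟩ := h
  obtain ⟨h1', h2', h3'⟩ := h'
  have e0 : (Q' 0 + Q' 3, Q' 4 + Q' 1) = (Q 0 + Q 3, Q 4 + Q 1) := congrFun hb 0
  have e1 : (Q' 1 + Q' 5, Q' 6 + Q' 2) = (Q 1 + Q 5, Q 6 + Q 2) := congrFun hb 1
  have e2 : (Q' 2 + Q' 7, Q' 8 + Q' 0) = (Q 2 + Q 7, Q 8 + Q 0) := congrFun hb 2
  rw [Prod.mk.injEq] at e0 e1 e2
  obtain ⟨e0a, e0b⟩ := e0
  obtain ⟨e1a, e1b⟩ := e1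
  obtain ⟨e2a, e2b⟩ := e2
  exact ⟨Q' 0 - Q 0, by omega, by omega, by omega, by omega, by omega,
    by omega, by omega, by omega, by omega⟩

lemma shift_hex (Q : Fin 9 → ℤ) (h : hex Q) (t : ℤ) : hex (shiftBZ Q t) := by
  obtain ⟨h1, h2, h3⟩ := h
  refine ⟨?_, ?_, ?_⟩
  · show Q 3 - t + (Q 4 - t) = Q 6 - t + (Q 7 - t); omega
  · show Q 5 - t + (Q 6 - t) = Q 8 - t + (Q 3 - t); omega
  · show Q 7 - t + (Q 8 - t) = Q 4 - t + (Q 5 - t); omega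

lemma shift_bd (Q : Fin 9 → ℤ) (t : ℤ) : bd (shiftBZ Q t) = bd Q := by
  funext j
  fin_cases j
  · show (Q 0 + t + (Q 3 - t), Q 4 - t + (Q 1 + t)) = (Q 0 + Q 3, Q 4 + Q 1)
    exact congrArg₂ Prod.mk (by ring) (by ring)
  · show (Q 1 + t + (Q 5 - t), Q 6 - t + (Q 2 + t)) = (Q 1 + Q 5, Q 6 + Q 2)
    exact congrArg₂ Prod.mk (by ring) (by ring)
  · show (Q 2 + t + (Q 7 - t), Q 8 - t + (Q 0 + t)) = (Q 2 + Q 7, Q 8 + Q 0)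
    exact congrArg₂ Prod.mk (by ring) (by ring)

lemma shift_nonneg (Q : Fin 9 → ℤ) (t : ℤ)
    (h0 : 0 ≤ Q 0 + t) (h1 : 0 ≤ Q 1 + t) (h2 : 0 ≤ Q 2 + t)
    (h3 : t ≤ Q 3) (h4 : t ≤ Q 4) (h5 : t ≤ Q 5)
    (h6 : t ≤ Q 6) (h7 : t ≤ Q 7) (h8 : t ≤ Q 8) :
    ∀ i, 0 ≤ shiftBZ Q t i := by
  intro i
  fin_cases i
  exacts [h0, h1, h2, by show (0:ℤ) ≤ Q 3 - t; omega,
    by show (0:ℤ) ≤ Q 4 - t; omega, by show (0:ℤ) ≤ Q 5 - t; omega,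
    by show (0:ℤ) ≤ Q 6 - t; omega, by show (0:ℤ) ≤ Q 7 - t; omega,
    by show (0:ℤ) ≤ Q 8 - t; omega]


lemma t_zero (c0 c1 c2 d3 d4 d5 d6 d7 d8 t : ℤ)
    (q0 : 0 ≤ c0 + t) (q1 : 0 ≤ c1 + t) (q2 : 0 ≤ c2 + t)
    (q3 : 0 ≤ d3 - t) (q4 : 0 ≤ d4 - t) (q5 : 0 ≤ d5 - t)
    (q6 : 0 ≤ d6 - t) (q7 : 0 ≤ d7 - t) (q8 : 0 ≤ d8 - t)
    (hc : c0 = 0 ∨ c1 = 0 ∨ c2 = 0)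
    (hh : d3 = 0 ∨ d4 = 0 ∨ d5 = 0 ∨ d6 = 0 ∨ d7 = 0 ∨ d8 = 0) : t = 0 := by
  rcases hc with h | h | h <;> rcases hh with g | g | g | g | g | g <;> omega

set_option maxHeartbeats 1000000 in
/-- For a BZ triangle `Q`, the set of BZ triangles with boundary `∂(Q)` has exactly
one element if and only if it contains a triangle having some corner entry equal to
`0` and some hexagon entry equal to `0`. -/
theorem stmt_6 (Q : Fin 9 → ℤ) (hQ : isBZ Q) :
    (∃! Q' : Fin 9 → ℤ, isBZ Q' ∧ bd Q' = bd Q) ↔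
      (∃ Q' : Fin 9 → ℤ, isBZ Q' ∧ bd Q' = bd Q ∧
        (Q' 0 = 0 ∨ Q' 1 = 0 ∨ Q' 2 = 0) ∧
        (Q' 3 = 0 ∨ Q' 4 = 0 ∨ Q' 5 = 0 ∨ Q' 6 = 0 ∨ Q' 7 = 0 ∨ Q' 8 = 0)) := by
  obtain ⟨hpos, hhex⟩ := hQ
  have h3 := hpos 3; have h4 := hpos 4; have h5 := hpos 5
  have h6 := hpos 6; have h7 := hpos 7; have h8 := hpos 8
  have h0 := hpos 0; have h1 := hpos 1; have h2 := hpos 2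
  constructor
  · rintro ⟨w, hw, huniq⟩
    set t1 : ℤ := min (Q 3) (min (Q 4) (min (Q 5) (min (Q 6) (min (Q 7) (Q 8))))) with ht1
    set t2 : ℤ := min (Q 0) (min (Q 1) (Q 2)) with ht2
    have hA : isBZ (shiftBZ Q t1) ∧ bd (shiftBZ Q t1) = bd Q :=
      ⟨⟨shift_nonneg Q t1 (by omega) (by omega) (by omega) (by omega) (by omega)
          (by omega) (by omega) (by omega) (by omega), shift_hex Q hhex t1⟩,
        shift_bd Q t1⟩
    have hB : isBZ (shiftBZ Q (-t2)) ∧ bd (shiftBZ Q (-t2)) = bd Q :=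
      ⟨⟨shift_nonneg Q (-t2) (by omega) (by omega) (by omega) (by omega) (by omega)
          (by omega) (by omega) (by omega) (by omega), shift_hex Q hhex (-t2)⟩,
        shift_bd Q (-t2)⟩
    have hAB : shiftBZ Q t1 = shiftBZ Q (-t2) := by
      rw [huniq _ hA, huniq _ hB]
    have key : Q 0 + t1 = Q 0 + -t2 := congrFun hAB 0
    have ht10 : t1 = 0 := by omega
    have ht20 : t2 = 0 := by omega
    exact ⟨Q, ⟨hpos, hhex⟩, rfl, by omega, by omega⟩
  · rintro ⟨Q', ⟨hpos', hhex'⟩, hb', hc, hh⟩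
    refine ⟨Q', ⟨⟨hpos', hhex'⟩, hb'⟩, ?_⟩
    rintro y ⟨⟨hposy, hhexy⟩, hby⟩
    obtain ⟨t, e0, e1, e2, e3, e4, e5, e6, e7, e8⟩ :=
      fiber_struct Q' y hhex' hhexy (hby.trans hb'.symm)
    have p0 := hposy 0; have p1 := hposy 1; have p2 := hposy 2
    have p3 := hposy 3; have p4 := hposy 4; have p5 := hposy 5
    have p6 := hposy 6; have p7 := hposy 7; have p8 := hposy 8
    have ht0 : t = 0 :=
      t_zero (Q' 0) (Q' 1) (Q' 2) (Q' 3) (Q' 4) (Q' 5) (Q' 6) (Q' 7) (Q' 8) t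
        (e0 ▸ p0) (e1 ▸ p1) (e2 ▸ p2) (e3 ▸ p3) (e4 ▸ p4) (e5 ▸ p5)
        (e6 ▸ p6) (e7 ▸ p7) (e8 ▸ p8) hc hh
    subst ht0
    simp only [add_zero, sub_zero] at e0 e1 e2 e3 e4 e5 e6 e7 e8
    funext i
    fin_cases i
    exacts [e0, e1, e2, e3, e4, e5, e6, e7, e8]
end

section
/- Every lattice point of the cone C is a sum of the nine generating vectors with nonnegative integer coefficients; that is, C ∩ ℤ¹⁰ equals the additive submonoid of ℤ¹⁰ generated by g_X, g_S, g_T, g₁₂, g₂₃, g₃₁, g₂₁, g₃₂, g₁₃ (the cone is a normal affine semigroup generated in level 1). -/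
/-- The nine generators `g_X, g_S, g_T, g₁₂, g₂₃, g₃₁, g₂₁, g₃₂, g₁₃` of the
trinode cone in `ℤ¹⁰ = ℤ⁹ × ℤ` (first nine coordinates ordered
`(a₁,b₁,c₁,a₂,a₃,b₂,b₃,c₂,c₃)`, last coordinate the level). -/
def cbGens : Fin 9 → Fin 10 → ℤ :=
  ![![0, 0, 0, 0, 0, 0, 0, 0, 0, 1],  -- g_X
    ![0, 0, 0, 1, 0, 1, 0, 1, 0, 1],  -- g_S
    ![0, 0, 0, 0, 1, 0, 1, 0, 1, 1],  -- g_T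
    ![0, 0, 0, 1, 0, 0, 1, 0, 0, 1],  -- g₁₂
    ![0, 0, 0, 0, 0, 1, 0, 0, 1, 1],  -- g₂₃
    ![0, 0, 0, 0, 1, 0, 0, 1, 0, 1],  -- g₃₁
    ![0, 1, 0, 0, 0, 0, 0, 0, 0, 1],  -- g₂₁
    ![0, 0, 1, 0, 0, 0, 0, 0, 0, 1],  -- g₃₂
    ![1, 0, 0, 0, 0, 0, 0, 0, 0, 1]]  -- g₁₃

/-- The real versions of the nine generators. -/
noncomputable def cbGensR (i : Fin 9) : Fin 10 → ℝ := fun t => (cbGens i t : ℝ)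

/-- The polyhedral cone `C ⊆ ℝ¹⁰` generated by the nine vectors, i.e. the set of
their linear combinations with nonnegative real coefficients. -/
def coneC : Set (Fin 10 → ℝ) :=
  {y | ∃ c : Fin 9 → ℝ, (∀ i, 0 ≤ c i) ∧ y = ∑ i : Fin 9, c i • cbGensR i}


private lemma cbSum9 {M : Type*} [AddCommMonoid M] (f : Fin 9 → M) :
    ∑ i, f i = f 0 + f 1 + f 2 + f 3 + f 4 + f 5 + f 6 + f 7 + f 8 := by
  rw [Fin.sum_univ_castSucc, Fin.sum_univ_eight]; rfl

private lemma cbE0 (v : Fin 9 → ℤ) : (∑ i : Fin 9, v i • cbGens i) (0 : Fin 10) = v 8 := by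
  rw [Finset.sum_apply, cbSum9]
  simp only [Pi.smul_apply, smul_eq_mul, show cbGens 0 0 = 0 from rfl, show cbGens 1 0 = 0 from rfl, show cbGens 2 0 = 0 from rfl, show cbGens 3 0 = 0 from rfl, show cbGens 4 0 = 0 from rfl, show cbGens 5 0 = 0 from rfl, show cbGens 6 0 = 0 from rfl, show cbGens 7 0 = 0 from rfl, show cbGens 8 0 = 1 from rfl]
  ring

private lemma cbR0 (v : Fin 9 → ℝ) : (∑ i : Fin 9, v i • cbGensR i) (0 : Fin 10) = v 8 := by
  rw [Finset.sum_apply, cbSum9]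
  simp only [Pi.smul_apply, smul_eq_mul, show cbGensR 0 0 = 0 from by norm_num [cbGensR, show cbGens 0 0 = 0 from rfl], show cbGensR 1 0 = 0 from by norm_num [cbGensR, show cbGens 1 0 = 0 from rfl], show cbGensR 2 0 = 0 from by norm_num [cbGensR, show cbGens 2 0 = 0 from rfl], show cbGensR 3 0 = 0 from by norm_num [cbGensR, show cbGens 3 0 = 0 from rfl], show cbGensR 4 0 = 0 from by norm_num [cbGensR, show cbGens 4 0 = 0 from rfl], show cbGensR 5 0 = 0 from by norm_num [cbGensR, show cbGens 5 0 = 0 from rfl], show cbGensR 6 0 = 0 from by norm_num [cbGensR, show cbGens 6 0 = 0 from rfl], show cbGensR 7 0 = 0 from by norm_num [cbGensR, show cbGens 7 0 = 0 from rfl], show cbGensR 8 0 = 1 from by norm_num [cbGensR, show cbGens 8 0 = 1 from rfl]]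
  ring

private lemma cbE1 (v : Fin 9 → ℤ) : (∑ i : Fin 9, v i • cbGens i) (1 : Fin 10) = v 6 := by
  rw [Finset.sum_apply, cbSum9]
  simp only [Pi.smul_apply, smul_eq_mul, show cbGens 0 1 = 0 from rfl, show cbGens 1 1 = 0 from rfl, show cbGens 2 1 = 0 from rfl, show cbGens 3 1 = 0 from rfl, show cbGens 4 1 = 0 from rfl, show cbGens 5 1 = 0 from rfl, show cbGens 6 1 = 1 from rfl, show cbGens 7 1 = 0 from rfl, show cbGens 8 1 = 0 from rfl]
  ring

private lemma cbR1 (v : Fin 9 → ℝ) : (∑ i : Fin 9, v i • cbGensR i) (1 : Fin 10) = v 6 := by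
  rw [Finset.sum_apply, cbSum9]
  simp only [Pi.smul_apply, smul_eq_mul, show cbGensR 0 1 = 0 from by norm_num [cbGensR, show cbGens 0 1 = 0 from rfl], show cbGensR 1 1 = 0 from by norm_num [cbGensR, show cbGens 1 1 = 0 from rfl], show cbGensR 2 1 = 0 from by norm_num [cbGensR, show cbGens 2 1 = 0 from rfl], show cbGensR 3 1 = 0 from by norm_num [cbGensR, show cbGens 3 1 = 0 from rfl], show cbGensR 4 1 = 0 from by norm_num [cbGensR, show cbGens 4 1 = 0 from rfl], show cbGensR 5 1 = 0 from by norm_num [cbGensR, show cbGens 5 1 = 0 from rfl], show cbGensR 6 1 = 1 from by norm_num [cbGensR, show cbGens 6 1 = 1 from rfl], show cbGensR 7 1 = 0 from by norm_num [cbGensR, show cbGens 7 1 = 0 from rfl], show cbGensR 8 1 = 0 from by norm_num [cbGensR, show cbGens 8 1 = 0 from rfl]]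
  ring

private lemma cbE2 (v : Fin 9 → ℤ) : (∑ i : Fin 9, v i • cbGens i) (2 : Fin 10) = v 7 := by
  rw [Finset.sum_apply, cbSum9]
  simp only [Pi.smul_apply, smul_eq_mul, show cbGens 0 2 = 0 from rfl, show cbGens 1 2 = 0 from rfl, show cbGens 2 2 = 0 from rfl, show cbGens 3 2 = 0 from rfl, show cbGens 4 2 = 0 from rfl, show cbGens 5 2 = 0 from rfl, show cbGens 6 2 = 0 from rfl, show cbGens 7 2 = 1 from rfl, show cbGens 8 2 = 0 from rfl]
  ring

private lemma cbR2 (v : Fin 9 → ℝ) : (∑ i : Fin 9, v i • cbGensR i) (2 : Fin 10) = v 7 := by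
  rw [Finset.sum_apply, cbSum9]
  simp only [Pi.smul_apply, smul_eq_mul, show cbGensR 0 2 = 0 from by norm_num [cbGensR, show cbGens 0 2 = 0 from rfl], show cbGensR 1 2 = 0 from by norm_num [cbGensR, show cbGens 1 2 = 0 from rfl], show cbGensR 2 2 = 0 from by norm_num [cbGensR, show cbGens 2 2 = 0 from rfl], show cbGensR 3 2 = 0 from by norm_num [cbGensR, show cbGens 3 2 = 0 from rfl], show cbGensR 4 2 = 0 from by norm_num [cbGensR, show cbGens 4 2 = 0 from rfl], show cbGensR 5 2 = 0 from by norm_num [cbGensR, show cbGens 5 2 = 0 from rfl], show cbGensR 6 2 = 0 from by norm_num [cbGensR, show cbGens 6 2 = 0 from rfl], show cbGensR 7 2 = 1 from by norm_num [cbGensR, show cbGens 7 2 = 1 from rfl], show cbGensR 8 2 = 0 from by norm_num [cbGensR, show cbGens 8 2 = 0 from rfl]]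
  ring

private lemma cbE3 (v : Fin 9 → ℤ) : (∑ i : Fin 9, v i • cbGens i) (3 : Fin 10) = v 1 + v 3 := by
  rw [Finset.sum_apply, cbSum9]
  simp only [Pi.smul_apply, smul_eq_mul, show cbGens 0 3 = 0 from rfl, show cbGens 1 3 = 1 from rfl, show cbGens 2 3 = 0 from rfl, show cbGens 3 3 = 1 from rfl, show cbGens 4 3 = 0 from rfl, show cbGens 5 3 = 0 from rfl, show cbGens 6 3 = 0 from rfl, show cbGens 7 3 = 0 from rfl, show cbGens 8 3 = 0 from rfl]
  ring

private lemma cbR3 (v : Fin 9 → ℝ) : (∑ i : Fin 9, v i • cbGensR i) (3 : Fin 10) = v 1 + v 3 := by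
  rw [Finset.sum_apply, cbSum9]
  simp only [Pi.smul_apply, smul_eq_mul, show cbGensR 0 3 = 0 from by norm_num [cbGensR, show cbGens 0 3 = 0 from rfl], show cbGensR 1 3 = 1 from by norm_num [cbGensR, show cbGens 1 3 = 1 from rfl], show cbGensR 2 3 = 0 from by norm_num [cbGensR, show cbGens 2 3 = 0 from rfl], show cbGensR 3 3 = 1 from by norm_num [cbGensR, show cbGens 3 3 = 1 from rfl], show cbGensR 4 3 = 0 from by norm_num [cbGensR, show cbGens 4 3 = 0 from rfl], show cbGensR 5 3 = 0 from by norm_num [cbGensR, show cbGens 5 3 = 0 from rfl], show cbGensR 6 3 = 0 from by norm_num [cbGensR, show cbGens 6 3 = 0 from rfl], show cbGensR 7 3 = 0 from by norm_num [cbGensR, show cbGens 7 3 = 0 from rfl], show cbGensR 8 3 = 0 from by norm_num [cbGensR, show cbGens 8 3 = 0 from rfl]]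
  ring

private lemma cbE4 (v : Fin 9 → ℤ) : (∑ i : Fin 9, v i • cbGens i) (4 : Fin 10) = v 2 + v 5 := by
  rw [Finset.sum_apply, cbSum9]
  simp only [Pi.smul_apply, smul_eq_mul, show cbGens 0 4 = 0 from rfl, show cbGens 1 4 = 0 from rfl, show cbGens 2 4 = 1 from rfl, show cbGens 3 4 = 0 from rfl, show cbGens 4 4 = 0 from rfl, show cbGens 5 4 = 1 from rfl, show cbGens 6 4 = 0 from rfl, show cbGens 7 4 = 0 from rfl, show cbGens 8 4 = 0 from rfl]
  ring

private lemma cbR4 (v : Fin 9 → ℝ) : (∑ i : Fin 9, v i • cbGensR i) (4 : Fin 10) = v 2 + v 5 := by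
  rw [Finset.sum_apply, cbSum9]
  simp only [Pi.smul_apply, smul_eq_mul, show cbGensR 0 4 = 0 from by norm_num [cbGensR, show cbGens 0 4 = 0 from rfl], show cbGensR 1 4 = 0 from by norm_num [cbGensR, show cbGens 1 4 = 0 from rfl], show cbGensR 2 4 = 1 from by norm_num [cbGensR, show cbGens 2 4 = 1 from rfl], show cbGensR 3 4 = 0 from by norm_num [cbGensR, show cbGens 3 4 = 0 from rfl], show cbGensR 4 4 = 0 from by norm_num [cbGensR, show cbGens 4 4 = 0 from rfl], show cbGensR 5 4 = 1 from by norm_num [cbGensR, show cbGens 5 4 = 1 from rfl], show cbGensR 6 4 = 0 from by norm_num [cbGensR, show cbGens 6 4 = 0 from rfl], show cbGensR 7 4 = 0 from by norm_num [cbGensR, show cbGens 7 4 = 0 from rfl], show cbGensR 8 4 = 0 from by norm_num [cbGensR, show cbGens 8 4 = 0 from rfl]]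
  ring

private lemma cbE5 (v : Fin 9 → ℤ) : (∑ i : Fin 9, v i • cbGens i) (5 : Fin 10) = v 1 + v 4 := by
  rw [Finset.sum_apply, cbSum9]
  simp only [Pi.smul_apply, smul_eq_mul, show cbGens 0 5 = 0 from rfl, show cbGens 1 5 = 1 from rfl, show cbGens 2 5 = 0 from rfl, show cbGens 3 5 = 0 from rfl, show cbGens 4 5 = 1 from rfl, show cbGens 5 5 = 0 from rfl, show cbGens 6 5 = 0 from rfl, show cbGens 7 5 = 0 from rfl, show cbGens 8 5 = 0 from rfl]
  ring

private lemma cbR5 (v : Fin 9 → ℝ) : (∑ i : Fin 9, v i • cbGensR i) (5 : Fin 10) = v 1 + v 4 := by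
  rw [Finset.sum_apply, cbSum9]
  simp only [Pi.smul_apply, smul_eq_mul, show cbGensR 0 5 = 0 from by norm_num [cbGensR, show cbGens 0 5 = 0 from rfl], show cbGensR 1 5 = 1 from by norm_num [cbGensR, show cbGens 1 5 = 1 from rfl], show cbGensR 2 5 = 0 from by norm_num [cbGensR, show cbGens 2 5 = 0 from rfl], show cbGensR 3 5 = 0 from by norm_num [cbGensR, show cbGens 3 5 = 0 from rfl], show cbGensR 4 5 = 1 from by norm_num [cbGensR, show cbGens 4 5 = 1 from rfl], show cbGensR 5 5 = 0 from by norm_num [cbGensR, show cbGens 5 5 = 0 from rfl], show cbGensR 6 5 = 0 from by norm_num [cbGensR, show cbGens 6 5 = 0 from rfl], show cbGensR 7 5 = 0 from by norm_num [cbGensR, show cbGens 7 5 = 0 from rfl], show cbGensR 8 5 = 0 from by norm_num [cbGensR, show cbGens 8 5 = 0 from rfl]]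
  ring

private lemma cbE6 (v : Fin 9 → ℤ) : (∑ i : Fin 9, v i • cbGens i) (6 : Fin 10) = v 2 + v 3 := by
  rw [Finset.sum_apply, cbSum9]
  simp only [Pi.smul_apply, smul_eq_mul, show cbGens 0 6 = 0 from rfl, show cbGens 1 6 = 0 from rfl, show cbGens 2 6 = 1 from rfl, show cbGens 3 6 = 1 from rfl, show cbGens 4 6 = 0 from rfl, show cbGens 5 6 = 0 from rfl, show cbGens 6 6 = 0 from rfl, show cbGens 7 6 = 0 from rfl, show cbGens 8 6 = 0 from rfl]
  ring

private lemma cbR6 (v : Fin 9 → ℝ) : (∑ i : Fin 9, v i • cbGensR i) (6 : Fin 10) = v 2 + v 3 := by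
  rw [Finset.sum_apply, cbSum9]
  simp only [Pi.smul_apply, smul_eq_mul, show cbGensR 0 6 = 0 from by norm_num [cbGensR, show cbGens 0 6 = 0 from rfl], show cbGensR 1 6 = 0 from by norm_num [cbGensR, show cbGens 1 6 = 0 from rfl], show cbGensR 2 6 = 1 from by norm_num [cbGensR, show cbGens 2 6 = 1 from rfl], show cbGensR 3 6 = 1 from by norm_num [cbGensR, show cbGens 3 6 = 1 from rfl], show cbGensR 4 6 = 0 from by norm_num [cbGensR, show cbGens 4 6 = 0 from rfl], show cbGensR 5 6 = 0 from by norm_num [cbGensR, show cbGens 5 6 = 0 from rfl], show cbGensR 6 6 = 0 from by norm_num [cbGensR, show cbGens 6 6 = 0 from rfl], show cbGensR 7 6 = 0 from by norm_num [cbGensR, show cbGens 7 6 = 0 from rfl], show cbGensR 8 6 = 0 from by norm_num [cbGensR, show cbGens 8 6 = 0 from rfl]]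
  ring

private lemma cbE7 (v : Fin 9 → ℤ) : (∑ i : Fin 9, v i • cbGens i) (7 : Fin 10) = v 1 + v 5 := by
  rw [Finset.sum_apply, cbSum9]
  simp only [Pi.smul_apply, smul_eq_mul, show cbGens 0 7 = 0 from rfl, show cbGens 1 7 = 1 from rfl, show cbGens 2 7 = 0 from rfl, show cbGens 3 7 = 0 from rfl, show cbGens 4 7 = 0 from rfl, show cbGens 5 7 = 1 from rfl, show cbGens 6 7 = 0 from rfl, show cbGens 7 7 = 0 from rfl, show cbGens 8 7 = 0 from rfl]
  ring

private lemma cbR7 (v : Fin 9 → ℝ) : (∑ i : Fin 9, v i • cbGensR i) (7 : Fin 10) = v 1 + v 5 := by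
  rw [Finset.sum_apply, cbSum9]
  simp only [Pi.smul_apply, smul_eq_mul, show cbGensR 0 7 = 0 from by norm_num [cbGensR, show cbGens 0 7 = 0 from rfl], show cbGensR 1 7 = 1 from by norm_num [cbGensR, show cbGens 1 7 = 1 from rfl], show cbGensR 2 7 = 0 from by norm_num [cbGensR, show cbGens 2 7 = 0 from rfl], show cbGensR 3 7 = 0 from by norm_num [cbGensR, show cbGens 3 7 = 0 from rfl], show cbGensR 4 7 = 0 from by norm_num [cbGensR, show cbGens 4 7 = 0 from rfl], show cbGensR 5 7 = 1 from by norm_num [cbGensR, show cbGens 5 7 = 1 from rfl], show cbGensR 6 7 = 0 from by norm_num [cbGensR, show cbGens 6 7 = 0 from rfl], show cbGensR 7 7 = 0 from by norm_num [cbGensR, show cbGens 7 7 = 0 from rfl], show cbGensR 8 7 = 0 from by norm_num [cbGensR, show cbGens 8 7 = 0 from rfl]]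
  ring

private lemma cbE8 (v : Fin 9 → ℤ) : (∑ i : Fin 9, v i • cbGens i) (8 : Fin 10) = v 2 + v 4 := by
  rw [Finset.sum_apply, cbSum9]
  simp only [Pi.smul_apply, smul_eq_mul, show cbGens 0 8 = 0 from rfl, show cbGens 1 8 = 0 from rfl, show cbGens 2 8 = 1 from rfl, show cbGens 3 8 = 0 from rfl, show cbGens 4 8 = 1 from rfl, show cbGens 5 8 = 0 from rfl, show cbGens 6 8 = 0 from rfl, show cbGens 7 8 = 0 from rfl, show cbGens 8 8 = 0 from rfl]
  ring

private lemma cbR8 (v : Fin 9 → ℝ) : (∑ i : Fin 9, v i • cbGensR i) (8 : Fin 10) = v 2 + v 4 := by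
  rw [Finset.sum_apply, cbSum9]
  simp only [Pi.smul_apply, smul_eq_mul, show cbGensR 0 8 = 0 from by norm_num [cbGensR, show cbGens 0 8 = 0 from rfl], show cbGensR 1 8 = 0 from by norm_num [cbGensR, show cbGens 1 8 = 0 from rfl], show cbGensR 2 8 = 1 from by norm_num [cbGensR, show cbGens 2 8 = 1 from rfl], show cbGensR 3 8 = 0 from by norm_num [cbGensR, show cbGens 3 8 = 0 from rfl], show cbGensR 4 8 = 1 from by norm_num [cbGensR, show cbGens 4 8 = 1 from rfl], show cbGensR 5 8 = 0 from by norm_num [cbGensR, show cbGens 5 8 = 0 from rfl], show cbGensR 6 8 = 0 from by norm_num [cbGensR, show cbGens 6 8 = 0 from rfl], show cbGensR 7 8 = 0 from by norm_num [cbGensR, show cbGens 7 8 = 0 from rfl], show cbGensR 8 8 = 0 from by norm_num [cbGensR, show cbGens 8 8 = 0 from rfl]]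
  ring

private lemma cbE9 (v : Fin 9 → ℤ) : (∑ i : Fin 9, v i • cbGens i) (9 : Fin 10) = v 0 + v 1 + v 2 + v 3 + v 4 + v 5 + v 6 + v 7 + v 8 := by
  rw [Finset.sum_apply, cbSum9]
  simp only [Pi.smul_apply, smul_eq_mul, show cbGens 0 9 = 1 from rfl, show cbGens 1 9 = 1 from rfl, show cbGens 2 9 = 1 from rfl, show cbGens 3 9 = 1 from rfl, show cbGens 4 9 = 1 from rfl, show cbGens 5 9 = 1 from rfl, show cbGens 6 9 = 1 from rfl, show cbGens 7 9 = 1 from rfl, show cbGens 8 9 = 1 from rfl]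
  ring

private lemma cbR9 (v : Fin 9 → ℝ) : (∑ i : Fin 9, v i • cbGensR i) (9 : Fin 10) = v 0 + v 1 + v 2 + v 3 + v 4 + v 5 + v 6 + v 7 + v 8 := by
  rw [Finset.sum_apply, cbSum9]
  simp only [Pi.smul_apply, smul_eq_mul, show cbGensR 0 9 = 1 from by norm_num [cbGensR, show cbGens 0 9 = 1 from rfl], show cbGensR 1 9 = 1 from by norm_num [cbGensR, show cbGens 1 9 = 1 from rfl], show cbGensR 2 9 = 1 from by norm_num [cbGensR, show cbGens 2 9 = 1 from rfl], show cbGensR 3 9 = 1 from by norm_num [cbGensR, show cbGens 3 9 = 1 from rfl], show cbGensR 4 9 = 1 from by norm_num [cbGensR, show cbGens 4 9 = 1 from rfl], show cbGensR 5 9 = 1 from by norm_num [cbGensR, show cbGens 5 9 = 1 from rfl], show cbGensR 6 9 = 1 from by norm_num [cbGensR, show cbGens 6 9 = 1 from rfl], show cbGensR 7 9 = 1 from by norm_num [cbGensR, show cbGens 7 9 = 1 from rfl], show cbGensR 8 9 = 1 from by norm_num [cbGensR, show cbGens 8 9 = 1 from rfl]]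
  ring

private lemma vecE0 {α : Type*} (a0 a1 a2 a3 a4 a5 a6 a7 a8 : α) :
    ![a0, a1, a2, a3, a4, a5, a6, a7, a8] (0 : Fin 9) = a0 := rfl
private lemma vecE1 {α : Type*} (a0 a1 a2 a3 a4 a5 a6 a7 a8 : α) :
    ![a0, a1, a2, a3, a4, a5, a6, a7, a8] (1 : Fin 9) = a1 := rfl
private lemma vecE2 {α : Type*} (a0 a1 a2 a3 a4 a5 a6 a7 a8 : α) :
    ![a0, a1, a2, a3, a4, a5, a6, a7, a8] (2 : Fin 9) = a2 := rfl
private lemma vecE3 {α : Type*} (a0 a1 a2 a3 a4 a5 a6 a7 a8 : α) :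
    ![a0, a1, a2, a3, a4, a5, a6, a7, a8] (3 : Fin 9) = a3 := rfl
private lemma vecE4 {α : Type*} (a0 a1 a2 a3 a4 a5 a6 a7 a8 : α) :
    ![a0, a1, a2, a3, a4, a5, a6, a7, a8] (4 : Fin 9) = a4 := rfl
private lemma vecE5 {α : Type*} (a0 a1 a2 a3 a4 a5 a6 a7 a8 : α) :
    ![a0, a1, a2, a3, a4, a5, a6, a7, a8] (5 : Fin 9) = a5 := rfl
private lemma vecE6 {α : Type*} (a0 a1 a2 a3 a4 a5 a6 a7 a8 : α) :
    ![a0, a1, a2, a3, a4, a5, a6, a7, a8] (6 : Fin 9) = a6 := rfl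
private lemma vecE7 {α : Type*} (a0 a1 a2 a3 a4 a5 a6 a7 a8 : α) :
    ![a0, a1, a2, a3, a4, a5, a6, a7, a8] (7 : Fin 9) = a7 := rfl
private lemma vecE8 {α : Type*} (a0 a1 a2 a3 a4 a5 a6 a7 a8 : α) :
    ![a0, a1, a2, a3, a4, a5, a6, a7, a8] (8 : Fin 9) = a8 := rfl

/-- Every lattice point of the cone `C` is a sum of the nine generating vectors with
nonnegative integer coefficients: `C ∩ ℤ¹⁰` is the additive submonoid generated by
`g_X, g_S, g_T, g₁₂, g₂₃, g₃₁, g₂₁, g₃₂, g₁₃`. -/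
theorem stmt_7 (x : Fin 10 → ℤ) :
    ((fun t => (x t : ℝ)) ∈ coneC) ↔
      ∃ n : Fin 9 → ℕ, x = ∑ i : Fin 9, (n i : ℤ) • cbGens i := by
  constructor
  · rintro ⟨c, hc, hx⟩
    have h : ∀ t : Fin 10, (x t : ℝ) = (∑ i : Fin 9, c i • cbGensR i) t := fun t =>
      congrFun hx t
    have h0 := h 0; have h1 := h 1; have h2 := h 2; have h3 := h 3
    have h4 := h 4; have h5 := h 5; have h6 := h 6; have h7 := h 7
    have h8 := h 8; have h9 := h 9
    rw [cbR0] at h0; rw [cbR1] at h1; rw [cbR2] at h2; rw [cbR3] at h3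
    rw [cbR4] at h4; rw [cbR5] at h5; rw [cbR6] at h6; rw [cbR7] at h7
    rw [cbR8] at h8; rw [cbR9] at h9
    have hc0 := hc 0; have hc1 := hc 1; have hc2 := hc 2; have hc3 := hc 3
    have hc4 := hc 4; have hc5 := hc 5; have hc6 := hc 6; have hc7 := hc 7
    have hc8 := hc 8
    have n0 : 0 ≤ x 0 := by exact_mod_cast (by linarith : (0:ℝ) ≤ (x 0 : ℝ))
    have n1 : 0 ≤ x 1 := by exact_mod_cast (by linarith : (0:ℝ) ≤ (x 1 : ℝ))
    have n2 : 0 ≤ x 2 := by exact_mod_cast (by linarith : (0:ℝ) ≤ (x 2 : ℝ))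
    have n3 : 0 ≤ x 3 := by exact_mod_cast (by linarith : (0:ℝ) ≤ (x 3 : ℝ))
    have n4 : 0 ≤ x 4 := by exact_mod_cast (by linarith : (0:ℝ) ≤ (x 4 : ℝ))
    have n5 : 0 ≤ x 5 := by exact_mod_cast (by linarith : (0:ℝ) ≤ (x 5 : ℝ))
    have n6 : 0 ≤ x 6 := by exact_mod_cast (by linarith : (0:ℝ) ≤ (x 6 : ℝ))
    have n7 : 0 ≤ x 7 := by exact_mod_cast (by linarith : (0:ℝ) ≤ (x 7 : ℝ))
    have n8 : 0 ≤ x 8 := by exact_mod_cast (by linarith : (0:ℝ) ≤ (x 8 : ℝ))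
    have hx1 : x 3 + x 4 = x 6 + x 7 := by
      have : (x 3 + x 4 : ℝ) = (x 6 + x 7 : ℝ) := by push_cast; linarith
      exact_mod_cast this
    have hx2 : x 5 + x 6 = x 8 + x 3 := by
      have : (x 5 + x 6 : ℝ) = (x 8 + x 3 : ℝ) := by push_cast; linarith
      exact_mod_cast this
    have hL0 : x 0 + x 1 + x 2 + x 5 + x 6 + x 7 - x 3 ≤ x 9 := by
      have : ((x 0 + x 1 + x 2 + x 5 + x 6 + x 7 - x 3 : ℤ) : ℝ) ≤ ((x 9 : ℤ) : ℝ) := by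
        push_cast; linarith
      exact_mod_cast this
    have hL1 : x 0 + x 1 + x 2 + x 6 + x 7 ≤ x 9 := by
      have : ((x 0 + x 1 + x 2 + x 6 + x 7 : ℤ) : ℝ) ≤ ((x 9 : ℤ) : ℝ) := by
        push_cast; linarith
      exact_mod_cast this
    have hL2 : x 0 + x 1 + x 2 + x 5 + x 6 ≤ x 9 := by
      have : ((x 0 + x 1 + x 2 + x 5 + x 6 : ℤ) : ℝ) ≤ ((x 9 : ℤ) : ℝ) := by
        push_cast; linarith
      exact_mod_cast this
    clear h h0 h1 h2 h3 h4 h5 h6 h7 h8 h9 hc hc0 hc1 hc2 hc3 hc4 hc5 hc6 hc7 hc8 hx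
    obtain ⟨M, hM0, hM1, hM2, hM3, hM6, hMl⟩ :
        ∃ M : ℤ, 0 ≤ M ∧ x 3 - x 5 ≤ M ∧ x 3 - x 7 ≤ M ∧ M ≤ x 3 ∧ M ≤ x 6 ∧
          x 0 + x 1 + x 2 + x 5 + x 6 + x 7 - x 3 + M ≤ x 9 := by
      refine ⟨max 0 (max (x 3 - x 5) (x 3 - x 7)), le_max_left _ _,
        le_trans (le_max_left _ _) (le_max_right _ _),
        le_trans (le_max_right _ _) (le_max_right _ _),
        max_le n3 (max_le (by omega) (by omega)),
        max_le n6 (max_le (by omega) (by omega)), ?_⟩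
      have : max 0 (max (x 3 - x 5) (x 3 - x 7)) ≤
          x 9 - (x 0 + x 1 + x 2 + x 5 + x 6 + x 7 - x 3) :=
        max_le (by omega) (max_le (by omega) (by omega))
      omega
    refine ⟨![(x 9 - (x 0 + x 1 + x 2 + x 5 + x 6 + x 7 - x 3 + M)).toNat,
      (x 3 - M).toNat, (x 6 - M).toNat, M.toNat,
      (M - x 3 + x 5).toNat, (M - x 3 + x 7).toNat,
      (x 1).toNat, (x 2).toNat, (x 0).toNat], ?_⟩
    funext t
    set v : Fin 9 → ℤ := fun i =>
      ((![(x 9 - (x 0 + x 1 + x 2 + x 5 + x 6 + x 7 - x 3 + M)).toNat,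
      (x 3 - M).toNat, (x 6 - M).toNat, M.toNat,
      (M - x 3 + x 5).toNat, (M - x 3 + x 7).toNat,
      (x 1).toNat, (x 2).toNat, (x 0).toNat] i : ℕ) : ℤ) with hv
    have v0 : v 0 = x 9 - (x 0 + x 1 + x 2 + x 5 + x 6 + x 7 - x 3 + M) := by
      simp only [hv]; rw [vecE0]; omega
    have v1 : v 1 = x 3 - M := by simp only [hv]; rw [vecE1]; omega
    have v2 : v 2 = x 6 - M := by simp only [hv]; rw [vecE2]; omega
    have v3 : v 3 = M := by simp only [hv]; rw [vecE3]; omega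
    have v4 : v 4 = M - x 3 + x 5 := by simp only [hv]; rw [vecE4]; omega
    have v5 : v 5 = M - x 3 + x 7 := by simp only [hv]; rw [vecE5]; omega
    have v6 : v 6 = x 1 := by simp only [hv]; rw [vecE6]; omega
    have v7 : v 7 = x 2 := by simp only [hv]; rw [vecE7]; omega
    have v8 : v 8 = x 0 := by simp only [hv]; rw [vecE8]; omega
    fin_cases t
    · show x 0 = (∑ i : Fin 9, v i • cbGens i) 0
      rw [cbE0]; omega
    · show x 1 = (∑ i : Fin 9, v i • cbGens i) 1
      rw [cbE1]; omega
    · show x 2 = (∑ i : Fin 9, v i • cbGens i) 2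
      rw [cbE2]; omega
    · show x 3 = (∑ i : Fin 9, v i • cbGens i) 3
      rw [cbE3]; omega
    · show x 4 = (∑ i : Fin 9, v i • cbGens i) 4
      rw [cbE4]; omega
    · show x 5 = (∑ i : Fin 9, v i • cbGens i) 5
      rw [cbE5]; omega
    · show x 6 = (∑ i : Fin 9, v i • cbGens i) 6
      rw [cbE6]; omega
    · show x 7 = (∑ i : Fin 9, v i • cbGens i) 7
      rw [cbE7]; omega
    · show x 8 = (∑ i : Fin 9, v i • cbGens i) 8
      rw [cbE8]; omega
    · show x 9 = (∑ i : Fin 9, v i • cbGens i) 9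
      rw [cbE9]; omega
  · rintro ⟨n, rfl⟩
    refine ⟨fun i => (n i : ℝ), fun i => by positivity, ?_⟩
    funext t
    set w : Fin 9 → ℤ := fun i => (n i : ℤ) with hw
    set wR : Fin 9 → ℝ := fun i => (n i : ℝ) with hwR
    have cast : ∀ i, ((w i : ℤ) : ℝ) = wR i := by intro i; rw [hw, hwR]; push_cast; rfl
    fin_cases t
    · show ((∑ i : Fin 9, w i • cbGens i) 0 : ℝ) = (∑ i : Fin 9, wR i • cbGensR i) (0 : Fin 10)
      rw [cbE0, cbR0]; push_cast [← cast]; ring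
    · show ((∑ i : Fin 9, w i • cbGens i) 1 : ℝ) = (∑ i : Fin 9, wR i • cbGensR i) (1 : Fin 10)
      rw [cbE1, cbR1]; push_cast [← cast]; ring
    · show ((∑ i : Fin 9, w i • cbGens i) 2 : ℝ) = (∑ i : Fin 9, wR i • cbGensR i) (2 : Fin 10)
      rw [cbE2, cbR2]; push_cast [← cast]; ring
    · show ((∑ i : Fin 9, w i • cbGens i) 3 : ℝ) = (∑ i : Fin 9, wR i • cbGensR i) (3 : Fin 10)
      rw [cbE3, cbR3]; push_cast [← cast]; ring
    · show ((∑ i : Fin 9, w i • cbGens i) 4 : ℝ) = (∑ i : Fin 9, wR i • cbGensR i) (4 : Fin 10)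
      rw [cbE4, cbR4]; push_cast [← cast]; ring
    · show ((∑ i : Fin 9, w i • cbGens i) 5 : ℝ) = (∑ i : Fin 9, wR i • cbGensR i) (5 : Fin 10)
      rw [cbE5, cbR5]; push_cast [← cast]; ring
    · show ((∑ i : Fin 9, w i • cbGens i) 6 : ℝ) = (∑ i : Fin 9, wR i • cbGensR i) (6 : Fin 10)
      rw [cbE6, cbR6]; push_cast [← cast]; ring
    · show ((∑ i : Fin 9, w i • cbGens i) 7 : ℝ) = (∑ i : Fin 9, wR i • cbGensR i) (7 : Fin 10)
      rw [cbE7, cbR7]; push_cast [← cast]; ring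
    · show ((∑ i : Fin 9, w i • cbGens i) 8 : ℝ) = (∑ i : Fin 9, wR i • cbGensR i) (8 : Fin 10)
      rw [cbE8, cbR8]; push_cast [← cast]; ring
    · show ((∑ i : Fin 9, w i • cbGens i) 9 : ℝ) = (∑ i : Fin 9, wR i • cbGensR i) (9 : Fin 10)
      rw [cbE9, cbR9]; push_cast [← cast]; ring
end

section
/- Let ψ be the ℂ-algebra homomorphism from the polynomial ring ℂ[z_X, z_S, z_T, z₁₂, z₂₃, z₃₁, z₂₁, z₃₂, z₁₃] to the group algebra ℂ[ℤ¹⁰] (the AddMonoidAlgebra of ℤ¹⁰ over ℂ) sending z_X, z_S, z_T, z_{ij} respectively to the basis elements of g_X, g_S, g_T, g_{ij}. Then the kernel of ψ is the principal ideal generated by z_X·z_S·z_T − z₁₂·z₂₃·z₃₁. -/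
/-- The `ℂ`-algebra map `ψ : ℂ[z_X, z_S, z_T, z₁₂, z₂₃, z₃₁, z₂₁, z₃₂, z₁₃] → ℂ[ℤ¹⁰]`
sending each variable to the corresponding basis element of the group algebra. -/
noncomputable def psiCB : MvPolynomial (Fin 9) ℂ →ₐ[ℂ] AddMonoidAlgebra ℂ (Fin 10 → ℤ) :=
  MvPolynomial.aeval fun i => AddMonoidAlgebra.of' ℂ (Fin 10 → ℤ) (cbGens i)

open MvPolynomial Finsupp

def Amap (e : Fin 9 →₀ ℕ) : Fin 10 → ℤ := fun j => ∑ i : Fin 9, (e i : ℤ) * cbGens i j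

lemma Amap_eq_sum (e : Fin 9 →₀ ℕ) : Amap e = ∑ i : Fin 9, (e i : ℤ) • cbGens i := by
  funext j
  simp [Amap]

lemma Amap_add (e f : Fin 9 →₀ ℕ) : Amap (e + f) = Amap e + Amap f := by
  funext j
  simp [Amap, Finsupp.add_apply, add_mul, Finset.sum_add_distrib]

lemma Amap_single (i : Fin 9) (k : ℕ) : Amap (Finsupp.single i k) = (k : ℤ) • cbGens i := by
  rw [Amap_eq_sum]
  simp [Finsupp.single_apply]

lemma prod_single (s : Finset (Fin 9)) (h : Fin 9 → (Fin 10 → ℤ)) :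
    (∏ i ∈ s, AddMonoidAlgebra.single (h i) (1:ℂ)) = AddMonoidAlgebra.single (∑ i ∈ s, h i) 1 := by
  classical
  induction s using Finset.induction with
  | empty => simp [AddMonoidAlgebra.one_def]
  | insert _ _ hx ih =>
    rw [Finset.prod_insert hx, Finset.sum_insert hx, ih, AddMonoidAlgebra.single_mul_single,
      one_mul]

lemma psi_monomial (e : Fin 9 →₀ ℕ) (c : ℂ) :
    psiCB (monomial e c) = AddMonoidAlgebra.single (Amap e) c := by
  rw [psiCB, aeval_monomial]
  have h1 : (Finsupp.prod e fun i k => AddMonoidAlgebra.of' ℂ (Fin 10 → ℤ) (cbGens i) ^ k)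
      = AddMonoidAlgebra.single (Amap e) 1 := by
    rw [Finsupp.prod_fintype _ _ (fun i => pow_zero _)]
    simp only [AddMonoidAlgebra.of'_apply, AddMonoidAlgebra.single_pow, one_pow]
    rw [prod_single, Amap_eq_sum]
    simp [natCast_zsmul]
  rw [h1]
  rw [show (algebraMap ℂ (AddMonoidAlgebra ℂ (Fin 10 → ℤ))) c = AddMonoidAlgebra.single 0 c
    from by rw [AddMonoidAlgebra.coe_algebraMap]; simp,
    AddMonoidAlgebra.single_mul_single, zero_add, mul_one]

def kmin (e : Fin 9 →₀ ℕ) : ℕ := min (e 3) (min (e 4) (e 5))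

noncomputable def usupp (k : ℕ) : Fin 9 →₀ ℕ :=
  Finsupp.single 3 k + Finsupp.single 4 k + Finsupp.single 5 k

noncomputable def wsupp (k : ℕ) : Fin 9 →₀ ℕ :=
  Finsupp.single 0 k + Finsupp.single 1 k + Finsupp.single 2 k

noncomputable def nf (e : Fin 9 →₀ ℕ) : Fin 9 →₀ ℕ := (e - usupp (kmin e)) + wsupp (kmin e)

lemma usupp_le (e : Fin 9 →₀ ℕ) : usupp (kmin e) ≤ e := by
  rw [Finsupp.le_def]
  intro i
  fin_cases i <;> simp [usupp, kmin, Finsupp.single_apply]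

lemma gens_key : cbGens 3 + cbGens 4 + cbGens 5 = cbGens 0 + cbGens 1 + cbGens 2 := by
  decide

lemma Amap_usupp_eq_wsupp (k : ℕ) : Amap (usupp k) = Amap (wsupp k) := by
  rw [usupp, wsupp, Amap_add, Amap_add, Amap_add, Amap_add]
  simp only [Amap_single, ← smul_add]
  rw [gens_key]

lemma Amap_nf (e : Fin 9 →₀ ℕ) : Amap (nf e) = Amap e := by
  conv_rhs => rw [← tsub_add_cancel_of_le (usupp_le e)]
  rw [nf, Amap_add, Amap_add, Amap_usupp_eq_wsupp]

lemma psi_eq_mapDomain (p : MvPolynomial (Fin 9) ℂ) :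
    psiCB p = AddMonoidAlgebra.mapDomain Amap p := by
  induction p using AddMonoidAlgebra.induction_linear with
  | zero => simp [AddMonoidAlgebra.mapDomain_zero]
  | add f g hf hg => rw [AddMonoidAlgebra.mapDomain_add, ← hf, ← hg, map_add]
  | single a b => rw [AddMonoidAlgebra.mapDomain_single, single_eq_monomial, psi_monomial]

lemma nf_apply3 (e : Fin 9 →₀ ℕ) : nf e 3 = e 3 - kmin e := by
  simp [nf, usupp, wsupp, Finsupp.tsub_apply, Finsupp.single_apply]

lemma nf_apply4 (e : Fin 9 →₀ ℕ) : nf e 4 = e 4 - kmin e := by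
  simp [nf, usupp, wsupp, Finsupp.tsub_apply, Finsupp.single_apply]

lemma nf_apply5 (e : Fin 9 →₀ ℕ) : nf e 5 = e 5 - kmin e := by
  simp [nf, usupp, wsupp, Finsupp.tsub_apply, Finsupp.single_apply]

lemma kmin_nf (e : Fin 9 →₀ ℕ) : kmin (nf e) = 0 := by
  have h3 := nf_apply3 e; have h4 := nf_apply4 e; have h5 := nf_apply5 e
  rw [kmin] at *; omega

lemma Amap_injOn : Set.InjOn Amap {e : Fin 9 →₀ ℕ | kmin e = 0} := by
  intro e he e' he' h
  have h0 := congrFun h 0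
  have h1 := congrFun h 1
  have h2 := congrFun h 2
  have h3 := congrFun h 3
  have h4 := congrFun h 4
  have h5 := congrFun h 5
  have h6 := congrFun h 6
  have h7 := congrFun h 7
  have h8 := congrFun h 8
  have h9 := congrFun h 9
  simp [Amap, Fin.sum_univ_succ, cbGens,
    show (![0,0,0,0,0,0,0,0,0,1] : Fin 10 → ℤ) 5 = 0 from rfl,
    show (![0,0,0,0,0,0,0,0,0,1] : Fin 10 → ℤ) 6 = 0 from rfl,
    show (![0,0,0,0,0,0,0,0,0,1] : Fin 10 → ℤ) 7 = 0 from rfl,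
    show (![0,0,0,0,0,0,0,0,0,1] : Fin 10 → ℤ) 8 = 0 from rfl,
    show (![0,0,0,0,0,0,0,0,0,1] : Fin 10 → ℤ) 9 = 1 from rfl,
    show (![0,0,0,1,0,1,0,1,0,1] : Fin 10 → ℤ) 5 = 1 from rfl,
    show (![0,0,0,1,0,1,0,1,0,1] : Fin 10 → ℤ) 6 = 0 from rfl,
    show (![0,0,0,1,0,1,0,1,0,1] : Fin 10 → ℤ) 7 = 1 from rfl,
    show (![0,0,0,1,0,1,0,1,0,1] : Fin 10 → ℤ) 8 = 0 from rfl,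
    show (![0,0,0,1,0,1,0,1,0,1] : Fin 10 → ℤ) 9 = 1 from rfl,
    show (![0,0,0,0,1,0,1,0,1,1] : Fin 10 → ℤ) 5 = 0 from rfl,
    show (![0,0,0,0,1,0,1,0,1,1] : Fin 10 → ℤ) 6 = 1 from rfl,
    show (![0,0,0,0,1,0,1,0,1,1] : Fin 10 → ℤ) 7 = 0 from rfl,
    show (![0,0,0,0,1,0,1,0,1,1] : Fin 10 → ℤ) 8 = 1 from rfl,
    show (![0,0,0,0,1,0,1,0,1,1] : Fin 10 → ℤ) 9 = 1 from rfl,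
    show (![0,0,0,1,0,0,1,0,0,1] : Fin 10 → ℤ) 5 = 0 from rfl,
    show (![0,0,0,1,0,0,1,0,0,1] : Fin 10 → ℤ) 6 = 1 from rfl,
    show (![0,0,0,1,0,0,1,0,0,1] : Fin 10 → ℤ) 7 = 0 from rfl,
    show (![0,0,0,1,0,0,1,0,0,1] : Fin 10 → ℤ) 8 = 0 from rfl,
    show (![0,0,0,1,0,0,1,0,0,1] : Fin 10 → ℤ) 9 = 1 from rfl,
    show (![0,0,0,0,0,1,0,0,1,1] : Fin 10 → ℤ) 5 = 1 from rfl,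
    show (![0,0,0,0,0,1,0,0,1,1] : Fin 10 → ℤ) 6 = 0 from rfl,
    show (![0,0,0,0,0,1,0,0,1,1] : Fin 10 → ℤ) 7 = 0 from rfl,
    show (![0,0,0,0,0,1,0,0,1,1] : Fin 10 → ℤ) 8 = 1 from rfl,
    show (![0,0,0,0,0,1,0,0,1,1] : Fin 10 → ℤ) 9 = 1 from rfl,
    show (![0,0,0,0,1,0,0,1,0,1] : Fin 10 → ℤ) 5 = 0 from rfl,
    show (![0,0,0,0,1,0,0,1,0,1] : Fin 10 → ℤ) 6 = 0 from rfl,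
    show (![0,0,0,0,1,0,0,1,0,1] : Fin 10 → ℤ) 7 = 1 from rfl,
    show (![0,0,0,0,1,0,0,1,0,1] : Fin 10 → ℤ) 8 = 0 from rfl,
    show (![0,0,0,0,1,0,0,1,0,1] : Fin 10 → ℤ) 9 = 1 from rfl,
    show (![0,1,0,0,0,0,0,0,0,1] : Fin 10 → ℤ) 5 = 0 from rfl,
    show (![0,1,0,0,0,0,0,0,0,1] : Fin 10 → ℤ) 6 = 0 from rfl,
    show (![0,1,0,0,0,0,0,0,0,1] : Fin 10 → ℤ) 7 = 0 from rfl,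
    show (![0,1,0,0,0,0,0,0,0,1] : Fin 10 → ℤ) 8 = 0 from rfl,
    show (![0,1,0,0,0,0,0,0,0,1] : Fin 10 → ℤ) 9 = 1 from rfl,
    show (![0,0,1,0,0,0,0,0,0,1] : Fin 10 → ℤ) 5 = 0 from rfl,
    show (![0,0,1,0,0,0,0,0,0,1] : Fin 10 → ℤ) 6 = 0 from rfl,
    show (![0,0,1,0,0,0,0,0,0,1] : Fin 10 → ℤ) 7 = 0 from rfl,
    show (![0,0,1,0,0,0,0,0,0,1] : Fin 10 → ℤ) 8 = 0 from rfl,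
    show (![0,0,1,0,0,0,0,0,0,1] : Fin 10 → ℤ) 9 = 1 from rfl,
    show (![1,0,0,0,0,0,0,0,0,1] : Fin 10 → ℤ) 5 = 0 from rfl,
    show (![1,0,0,0,0,0,0,0,0,1] : Fin 10 → ℤ) 6 = 0 from rfl,
    show (![1,0,0,0,0,0,0,0,0,1] : Fin 10 → ℤ) 7 = 0 from rfl,
    show (![1,0,0,0,0,0,0,0,0,1] : Fin 10 → ℤ) 8 = 0 from rfl,
    show (![1,0,0,0,0,0,0,0,0,1] : Fin 10 → ℤ) 9 = 1 from rfl,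
    show ((2:Fin 3).succ) = 3 by decide, show ((3:Fin 4).succ) = 4 by decide,
    show ((4:Fin 5).succ) = 5 by decide, show ((5:Fin 6).succ) = 6 by decide,
    show ((6:Fin 7).succ) = 7 by decide, show ((7:Fin 8).succ) = 8 by decide,
    show ((2:Fin 4).succ) = 3 by decide, show ((3:Fin 5).succ) = 4 by decide,
    show ((4:Fin 6).succ) = 5 by decide, show ((5:Fin 7).succ) = 6 by decide,
    show ((6:Fin 8).succ) = 7 by decide, show ((7:Fin 9).succ) = 8 by decide,
    show ((2:Fin 5).succ) = 3 by decide, show ((3:Fin 6).succ) = 4 by decide,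
    show ((4:Fin 7).succ) = 5 by decide, show ((5:Fin 8).succ) = 6 by decide,
    show ((6:Fin 9).succ) = 7 by decide,
    show ((2:Fin 6).succ) = 3 by decide, show ((3:Fin 7).succ) = 4 by decide,
    show ((4:Fin 8).succ) = 5 by decide, show ((5:Fin 9).succ) = 6 by decide,
    show ((2:Fin 7).succ) = 3 by decide, show ((3:Fin 8).succ) = 4 by decide,
    show ((4:Fin 9).succ) = 5 by decide,
    show ((2:Fin 8).succ) = 3 by decide, show ((3:Fin 9).succ) = 4 by decide,
    show ((2:Fin 9).succ) = 3 by decide]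
    at h0 h1 h2 h3 h4 h5 h6 h7 h8 h9
  simp only [Set.mem_setOf_eq, kmin] at he he'
  ext i
  fin_cases i <;> simp <;> omega

lemma monomial_usupp (k : ℕ) :
    ((X 3 * X 4 * X 5 : MvPolynomial (Fin 9) ℂ)) ^ k = monomial (usupp k) 1 := by
  rw [mul_pow, mul_pow, X_pow_eq_monomial, X_pow_eq_monomial, X_pow_eq_monomial,
    monomial_mul, monomial_mul, usupp]
  simp

lemma monomial_wsupp (k : ℕ) :
    ((X 0 * X 1 * X 2 : MvPolynomial (Fin 9) ℂ)) ^ k = monomial (wsupp k) 1 := by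
  rw [mul_pow, mul_pow, X_pow_eq_monomial, X_pow_eq_monomial, X_pow_eq_monomial,
    monomial_mul, monomial_mul, wsupp]
  simp

lemma sub_mem_span (e : Fin 9 →₀ ℕ) (c : ℂ) :
    (monomial e c - monomial (nf e) c : MvPolynomial (Fin 9) ℂ) ∈
      Ideal.span {(X 0 * X 1 * X 2 - X 3 * X 4 * X 5 : MvPolynomial (Fin 9) ℂ)} := by
  rw [Ideal.mem_span_singleton]
  have h1 : (monomial e c : MvPolynomial (Fin 9) ℂ)
      = monomial (e - usupp (kmin e)) c * (X 3 * X 4 * X 5) ^ (kmin e) := by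
    rw [monomial_usupp, monomial_mul, mul_one, tsub_add_cancel_of_le (usupp_le e)]
  have h2 : (monomial (nf e) c : MvPolynomial (Fin 9) ℂ)
      = monomial (e - usupp (kmin e)) c * (X 0 * X 1 * X 2) ^ (kmin e) := by
    rw [monomial_wsupp, monomial_mul, mul_one, nf]
  rw [h1, h2, ← mul_sub]
  refine Dvd.dvd.mul_left ?_ _
  have hd := sub_dvd_pow_sub_pow (X 3 * X 4 * X 5 : MvPolynomial (Fin 9) ℂ)
    (X 0 * X 1 * X 2) (kmin e)
  rwa [show (X 0 * X 1 * X 2 - X 3 * X 4 * X 5 : MvPolynomial (Fin 9) ℂ)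
    = -(X 3 * X 4 * X 5 - X 0 * X 1 * X 2) from (neg_sub _ _).symm, neg_dvd]

noncomputable def nfD (p : MvPolynomial (Fin 9) ℂ) : MvPolynomial (Fin 9) ℂ :=
  AddMonoidAlgebra.mapDomain nf p

lemma nfD_def (p : MvPolynomial (Fin 9) ℂ) : nfD p = AddMonoidAlgebra.mapDomain nf p := rfl

lemma nfD_add (p q : MvPolynomial (Fin 9) ℂ) : nfD (p + q) = nfD p + nfD q :=
  AddMonoidAlgebra.mapDomain_add _ _ _

lemma nfD_monomial (a : Fin 9 →₀ ℕ) (b : ℂ) : nfD (monomial a b) = monomial (nf a) b := by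
  rw [← single_eq_monomial, ← single_eq_monomial]
  exact AddMonoidAlgebra.mapDomain_single

lemma nfD_zero : nfD 0 = 0 := AddMonoidAlgebra.mapDomain_zero _

lemma diff_mem (p : MvPolynomial (Fin 9) ℂ) :
    p - nfD p ∈
      Ideal.span {(X 0 * X 1 * X 2 - X 3 * X 4 * X 5 : MvPolynomial (Fin 9) ℂ)} := by
  refine MvPolynomial.monomial_add_induction_on
    (motive := fun q => q - nfD q ∈
      Ideal.span {(X 0 * X 1 * X 2 - X 3 * X 4 * X 5 : MvPolynomial (Fin 9) ℂ)})
    p (fun a => ?_) (fun a b f _ _ ih => ?_)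
  · show monomial 0 a - nfD (monomial 0 a) ∈ _
    rw [nfD_monomial]
    exact sub_mem_span 0 a
  · show (monomial a b + (show MvPolynomial (Fin 9) ℂ from f)) - nfD (monomial a b + (show MvPolynomial (Fin 9) ℂ from f)) ∈ _
    rw [nfD_add, nfD_monomial]
    have heq : (monomial a b + (show MvPolynomial (Fin 9) ℂ from f)) - (monomial (nf a) b + nfD f)
        = (monomial a b - monomial (nf a) b) + ((show MvPolynomial (Fin 9) ℂ from f) - nfD f) := by ring
    rw [heq]
    exact Ideal.add_mem _ (sub_mem_span a b) ih

open MvPolynomial in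
/-- The kernel of `ψ` is the principal ideal generated by `z_X·z_S·z_T − z₁₂·z₂₃·z₃₁`. -/
theorem stmt_8 :
    RingHom.ker psiCB =
      Ideal.span {(X 0 * X 1 * X 2 - X 3 * X 4 * X 5 : MvPolynomial (Fin 9) ℂ)} := by
  apply le_antisymm
  · intro p hp
    rw [RingHom.mem_ker] at hp
    have hmap : AddMonoidAlgebra.mapDomain Amap p = 0 := by rw [← psi_eq_mapDomain]; exact hp
    have hN : AddMonoidAlgebra.mapDomain Amap (AddMonoidAlgebra.mapDomain nf p) = 0 := by
      rw [← hmap]; apply AddMonoidAlgebra.coeff_injective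
      simp only [AddMonoidAlgebra.coeff_mapDomain]
      rw [← Finsupp.mapDomain_comp, show Amap ∘ nf = Amap from funext Amap_nf]
    have hNzero : nfD p = 0 := by
      rw [nfD]
      apply AddMonoidAlgebra.coeff_injective
      rw [AddMonoidAlgebra.coeff_mapDomain, AddMonoidAlgebra.coeff_zero]
      refine Finsupp.mapDomain_injOn {e : Fin 9 →₀ ℕ | kmin e = 0} Amap_injOn ?_ ?_ ?_
      · intro x hx
        have hx' := Finsupp.mapDomain_support (by exact hx)
        obtain ⟨y, _, rfl⟩ := Finset.mem_image.mp hx'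
        exact kmin_nf y
      · simp
      · simpa using congrArg AddMonoidAlgebra.coeff hN
    have := diff_mem p
    rwa [hNzero, sub_zero] at this
  · rw [Ideal.span_le, Set.singleton_subset_iff, SetLike.mem_coe, RingHom.mem_ker]
    have ha : psiCB (X 0 * X 1 * X 2 : MvPolynomial (Fin 9) ℂ)
        = AddMonoidAlgebra.single (cbGens 0 + cbGens 1 + cbGens 2) 1 := by
      simp [psiCB, AddMonoidAlgebra.of'_apply, AddMonoidAlgebra.single_mul_single]
    have hb : psiCB (X 3 * X 4 * X 5 : MvPolynomial (Fin 9) ℂ)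
        = AddMonoidAlgebra.single (cbGens 3 + cbGens 4 + cbGens 5) 1 := by
      simp [psiCB, AddMonoidAlgebra.of'_apply, AddMonoidAlgebra.single_mul_single]
    rw [map_sub, ha, hb, gens_key, sub_self]
end

section
/- Let ω = (1,1,1,1,1,1,1,1,1,6) ∈ ℤ¹⁰ (all nine triangle entries equal to 1 and level 6). Then the intrinsic (relative) interior of the cone C satisfies: relint(C) ∩ ℤ¹⁰ = {ω + u : u ∈ C ∩ ℤ¹⁰}. (This is the combinatorial Gorenstein property of the trinode conformal-block cone, with canonical generator in level 6.) -/
/-- `ω = (1,1,1,1,1,1,1,1,1,6)`. -/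
def omegaCB : Fin 10 → ℤ := ![1, 1, 1, 1, 1, 1, 1, 1, 1, 6]

namespace CBTrinode

lemma F10_5 : (5 : Fin 10) = Fin.succ 4 := rfl
lemma F10_6 : (6 : Fin 10) = Fin.succ 5 := rfl
lemma F10_7 : (7 : Fin 10) = Fin.succ 6 := rfl
lemma F10_8 : (8 : Fin 10) = Fin.succ 7 := rfl
lemma F10_9 : (9 : Fin 10) = Fin.succ 8 := rfl
lemma F9_5 : (5 : Fin 9) = Fin.succ 4 := rfl
lemma F9_6 : (6 : Fin 9) = Fin.succ 5 := rfl
lemma F9_7 : (7 : Fin 9) = Fin.succ 6 := rfl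
lemma F9_8 : (8 : Fin 9) = Fin.succ 7 := rfl
lemma F8_5 : (5 : Fin 8) = Fin.succ 4 := rfl
lemma F8_6 : (6 : Fin 8) = Fin.succ 5 := rfl
lemma F8_7 : (7 : Fin 8) = Fin.succ 6 := rfl
lemma F7_5 : (5 : Fin 7) = Fin.succ 4 := rfl
lemma F7_6 : (6 : Fin 7) = Fin.succ 5 := rfl
lemma F6_5 : (5 : Fin 6) = Fin.succ 4 := rfl

lemma sum_eval (c : Fin 9 → ℝ) (t : Fin 10) :
    (∑ i : Fin 9, c i • cbGensR i) t = ∑ i : Fin 9, c i * (cbGens i t : ℝ) := by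
  rw [Finset.sum_apply]; simp [cbGensR]

lemma coneC_facts {x : Fin 10 → ℝ} (hx : x ∈ coneC) :
    x 3 - x 5 - x 6 + x 8 = 0 ∧ x 5 - x 7 - x 8 + x 4 = 0 ∧
    (∀ t, 0 ≤ x t) ∧
    x 0 + x 1 + x 2 + x 3 + x 8 ≤ x 9 ∧
    x 0 + x 1 + x 2 + x 5 + x 4 ≤ x 9 ∧
    x 0 + x 1 + x 2 + x 7 + x 6 ≤ x 9 := by
  obtain ⟨c, hc, rfl⟩ := hx
  refine ⟨?_, ?_, ?_, ?_, ?_, ?_⟩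
  · simp only [sum_eval]
    rw [← Finset.sum_sub_distrib, ← Finset.sum_sub_distrib, ← Finset.sum_add_distrib]
    apply Finset.sum_eq_zero
    intro i _
    have h : (cbGens i 3 : ℝ) - cbGens i 5 - cbGens i 6 + cbGens i 8 = 0 := by
      exact_mod_cast congrArg (fun z : ℤ => (z : ℝ))
        (by revert i; decide : cbGens i 3 - cbGens i 5 - cbGens i 6 + cbGens i 8 = 0)
    linear_combination c i * h
  · simp only [sum_eval]
    rw [← Finset.sum_sub_distrib, ← Finset.sum_sub_distrib, ← Finset.sum_add_distrib]
    apply Finset.sum_eq_zero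
    intro i _
    have h : (cbGens i 5 : ℝ) - cbGens i 7 - cbGens i 8 + cbGens i 4 = 0 := by
      exact_mod_cast congrArg (fun z : ℤ => (z : ℝ))
        (by revert i; decide : cbGens i 5 - cbGens i 7 - cbGens i 8 + cbGens i 4 = 0)
    linear_combination c i * h
  · intro t
    rw [sum_eval]
    apply Finset.sum_nonneg
    intro i _
    have h : (0:ℤ) ≤ cbGens i t := by revert i t; decide
    exact mul_nonneg (hc i) (by exact_mod_cast h)
  · simp only [sum_eval]
    rw [← Finset.sum_add_distrib, ← Finset.sum_add_distrib, ← Finset.sum_add_distrib,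
      ← Finset.sum_add_distrib]
    apply Finset.sum_le_sum
    intro i _
    have h : (cbGens i 0 + cbGens i 1 + cbGens i 2 + cbGens i 3 + cbGens i 8 : ℤ) ≤
        cbGens i 9 := by revert i; decide
    have h' : (cbGens i 0 : ℝ) + cbGens i 1 + cbGens i 2 + cbGens i 3 + cbGens i 8 ≤
        cbGens i 9 := by exact_mod_cast h
    nlinarith [hc i]
  · simp only [sum_eval]
    rw [← Finset.sum_add_distrib, ← Finset.sum_add_distrib, ← Finset.sum_add_distrib,
      ← Finset.sum_add_distrib]
    apply Finset.sum_le_sum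
    intro i _
    have h : (cbGens i 0 + cbGens i 1 + cbGens i 2 + cbGens i 5 + cbGens i 4 : ℤ) ≤
        cbGens i 9 := by revert i; decide
    have h' : (cbGens i 0 : ℝ) + cbGens i 1 + cbGens i 2 + cbGens i 5 + cbGens i 4 ≤
        cbGens i 9 := by exact_mod_cast h
    nlinarith [hc i]
  · simp only [sum_eval]
    rw [← Finset.sum_add_distrib, ← Finset.sum_add_distrib, ← Finset.sum_add_distrib,
      ← Finset.sum_add_distrib]
    apply Finset.sum_le_sum
    intro i _
    have h : (cbGens i 0 + cbGens i 1 + cbGens i 2 + cbGens i 7 + cbGens i 6 : ℤ) ≤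
        cbGens i 9 := by revert i; decide
    have h' : (cbGens i 0 : ℝ) + cbGens i 1 + cbGens i 2 + cbGens i 7 + cbGens i 6 ≤
        cbGens i 9 := by exact_mod_cast h
    nlinarith [hc i]


lemma col0 : ∀ i : Fin 9, cbGens i 0 = ![0,0,0,0,0,0,0,0,1] i := by decide
lemma col1 : ∀ i : Fin 9, cbGens i 1 = ![0,0,0,0,0,0,1,0,0] i := by decide
lemma col2 : ∀ i : Fin 9, cbGens i 2 = ![0,0,0,0,0,0,0,1,0] i := by decide
lemma col3 : ∀ i : Fin 9, cbGens i 3 = ![0,1,0,1,0,0,0,0,0] i := by decide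
lemma col4 : ∀ i : Fin 9, cbGens i 4 = ![0,0,1,0,0,1,0,0,0] i := by decide
lemma col5 : ∀ i : Fin 9, cbGens i 5 = ![0,1,0,0,1,0,0,0,0] i := by decide
lemma col6 : ∀ i : Fin 9, cbGens i 6 = ![0,0,1,1,0,0,0,0,0] i := by decide
lemma col7 : ∀ i : Fin 9, cbGens i 7 = ![0,1,0,0,0,1,0,0,0] i := by decide
lemma col8 : ∀ i : Fin 9, cbGens i 8 = ![0,0,1,0,1,0,0,0,0] i := by decide
lemma col9 : ∀ i : Fin 9, cbGens i 9 = ![1,1,1,1,1,1,1,1,1] i := by decide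

lemma mem_coneC_of {x : Fin 10 → ℝ}
    (e1 : x 3 - x 5 - x 6 + x 8 = 0) (e2 : x 5 - x 7 - x 8 + x 4 = 0)
    (h0 : 0 ≤ x 0) (h1 : 0 ≤ x 1) (h2 : 0 ≤ x 2) (h3 : 0 ≤ x 3) (h4 : 0 ≤ x 4)
    (h5 : 0 ≤ x 5) (h6 : 0 ≤ x 6) (h7 : 0 ≤ x 7) (h8 : 0 ≤ x 8)
    (hA : x 0 + x 1 + x 2 + x 3 + x 8 ≤ x 9)
    (hB : x 0 + x 1 + x 2 + x 5 + x 4 ≤ x 9)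
    (hC : x 0 + x 1 + x 2 + x 7 + x 6 ≤ x 9) : x ∈ coneC := by
  set t := min (x 4) (min (x 6) (x 8)) with ht
  have ht4 : t ≤ x 4 := min_le_left _ _
  have ht6 : t ≤ x 6 := le_trans (min_le_right _ _) (min_le_left _ _)
  have ht8 : t ≤ x 8 := le_trans (min_le_right _ _) (min_le_right _ _)
  have ht0 : 0 ≤ t := le_min h4 (le_min h6 h8)
  have hkey : 0 ≤ x 7 - x 4 + t ∧ 0 ≤ x 9 - x 0 - x 1 - x 2 - x 7 - x 6 - x 8 + t := by
    rcases le_total (x 4) (min (x 6) (x 8)) with h | h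
    · have he : t = x 4 := min_eq_left h
      constructor <;> (rw [he]) <;> linarith
    · have he : t = min (x 6) (x 8) := min_eq_right h
      rcases le_total (x 6) (x 8) with h' | h'
      · have he' : t = x 6 := by rw [he]; exact min_eq_left h'
        constructor <;> (rw [he']) <;> linarith
      · have he' : t = x 8 := by rw [he]; exact min_eq_right h'
        constructor <;> (rw [he']) <;> linarith
  refine ⟨![x 9 - x 0 - x 1 - x 2 - x 7 - x 6 - x 8 + t,
      x 7 - x 4 + t, t, x 6 - t, x 8 - t, x 4 - t, x 1, x 2, x 0], ?_, ?_⟩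
  · intro i
    fin_cases i <;> simp [F9_5, F9_6, F9_7, F9_8, F8_5, F8_6, F8_7, F7_5, F7_6, F6_5] <;>
      first
        | exact hkey.1
        | exact hkey.2
        | linarith
  · funext s
    rw [sum_eval]
    fin_cases s <;>
      simp [Fin.sum_univ_succ, col0, col1, col2, col3, col4, col5, col6, col7, col8, col9] <;>
      linarith


noncomputable def omR : Fin 10 → ℝ := fun t => (omegaCB t : ℝ)

lemma omR_eval : omR 0 = 1 ∧ omR 1 = 1 ∧ omR 2 = 1 ∧ omR 3 = 1 ∧ omR 4 = 1 ∧ omR 5 = 1 ∧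
    omR 6 = 1 ∧ omR 7 = 1 ∧ omR 8 = 1 ∧ omR 9 = 6 := by
  have : ∀ s : Fin 10, omegaCB s = ![1,1,1,1,1,1,1,1,1,6] s := by decide
  refine ⟨?_, ?_, ?_, ?_, ?_, ?_, ?_, ?_, ?_, ?_⟩ <;>
    simp [omR, this, F10_5, F10_6, F10_7, F10_8, F10_9, F9_5, F9_6, F9_7, F9_8, F8_5, F8_6, F8_7, F7_5, F7_6, F6_5]

lemma omR_mem : omR ∈ coneC := by
  obtain ⟨o0,o1,o2,o3,o4,o5,o6,o7,o8,o9⟩ := omR_eval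
  exact mem_coneC_of (by rw [o3,o5,o6,o8]; norm_num) (by rw [o5,o7,o8,o4]; norm_num)
    (by rw [o0]; norm_num) (by rw [o1]; norm_num) (by rw [o2]; norm_num)
    (by rw [o3]; norm_num) (by rw [o4]; norm_num) (by rw [o5]; norm_num)
    (by rw [o6]; norm_num) (by rw [o7]; norm_num) (by rw [o8]; norm_num)
    (by rw [o0,o1,o2,o3,o8,o9]; norm_num) (by rw [o0,o1,o2,o5,o4,o9]; norm_num)
    (by rw [o0,o1,o2,o7,o6,o9]; norm_num)

lemma affineSpan_facts {x : Fin 10 → ℝ} (hx : x ∈ affineSpan ℝ coneC) :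
    x 3 - x 5 - x 6 + x 8 = 0 ∧ x 5 - x 7 - x 8 + x 4 = 0 := by
  refine affineSpan_induction (p := fun z => z 3 - z 5 - z 6 + z 8 = 0 ∧ z 5 - z 7 - z 8 + z 4 = 0) hx (fun y hy => ⟨(coneC_facts hy).1, (coneC_facts hy).2.1⟩) ?_
  rintro r u v w ⟨hu1, hu2⟩ ⟨hv1, hv2⟩ ⟨hw1, hw2⟩
  have hev : ∀ s : Fin 10, (r • (u -ᵥ v) +ᵥ w) s = r * (u s - v s) + w s := by
    intro s; simp [vsub_eq_sub, vadd_eq_add]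
  simp only [hev]
  constructor
  · linear_combination r * hu1 - r * hv1 + hw1
  · linear_combination r * hu2 - r * hv2 + hw2

/-- strict inequalities imply membership in the intrinsic interior -/
lemma mem_intrinsic_of_strict {x : Fin 10 → ℝ}
    (e1 : x 3 - x 5 - x 6 + x 8 = 0) (e2 : x 5 - x 7 - x 8 + x 4 = 0)
    (g0 : 0 < x 0) (g1 : 0 < x 1) (g2 : 0 < x 2) (g3 : 0 < x 3) (g4 : 0 < x 4)
    (g5 : 0 < x 5) (g6 : 0 < x 6) (g7 : 0 < x 7) (g8 : 0 < x 8)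
    (gA : x 0 + x 1 + x 2 + x 3 + x 8 < x 9)
    (gB : x 0 + x 1 + x 2 + x 5 + x 4 < x 9)
    (gC : x 0 + x 1 + x 2 + x 7 + x 6 < x 9) : x ∈ intrinsicInterior ℝ coneC := by
  have hxC : x ∈ coneC := mem_coneC_of e1 e2 g0.le g1.le g2.le g3.le g4.le g5.le g6.le g7.le
    g8.le gA.le gB.le gC.le
  rw [mem_intrinsicInterior]
  refine ⟨⟨x, subset_affineSpan ℝ coneC hxC⟩, ?_, rfl⟩
  rw [mem_interior]
  refine ⟨Subtype.val ⁻¹' ({z : Fin 10 → ℝ | 0 < z 0} ∩ {z | 0 < z 1} ∩ {z | 0 < z 2} ∩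
      {z | 0 < z 3} ∩ {z | 0 < z 4} ∩ {z | 0 < z 5} ∩ {z | 0 < z 6} ∩ {z | 0 < z 7} ∩
      {z | 0 < z 8} ∩ {z | z 0 + z 1 + z 2 + z 3 + z 8 < z 9} ∩
      {z | z 0 + z 1 + z 2 + z 5 + z 4 < z 9} ∩
      {z | z 0 + z 1 + z 2 + z 7 + z 6 < z 9}), ?_, ?_, ?_⟩
  · rintro ⟨z, hz⟩ hmem
    simp only [Set.mem_preimage, Set.mem_inter_iff, Set.mem_setOf_eq] at hmem
    obtain ⟨⟨⟨⟨⟨⟨⟨⟨⟨⟨⟨m0, m1⟩, m2⟩, m3⟩, m4⟩, m5⟩, m6⟩, m7⟩, m8⟩, mA⟩, mB⟩, mC⟩ := hmem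
    have hzA : z ∈ affineSpan ℝ coneC := hz
    obtain ⟨ze1, ze2⟩ := affineSpan_facts hzA
    exact mem_coneC_of ze1 ze2 m0.le m1.le m2.le m3.le m4.le m5.le m6.le m7.le m8.le
      mA.le mB.le mC.le
  · apply IsOpen.preimage continuous_subtype_val
    repeat' apply IsOpen.inter
    all_goals
      first
      | exact isOpen_lt continuous_const (continuous_apply _)
      | exact isOpen_lt (by continuity) (continuous_apply _)
  · simp only [Set.mem_preimage, Set.mem_inter_iff, Set.mem_setOf_eq]
    exact ⟨⟨⟨⟨⟨⟨⟨⟨⟨⟨⟨g0, g1⟩, g2⟩, g3⟩, g4⟩, g5⟩, g6⟩, g7⟩, g8⟩, gA⟩, gB⟩, gC⟩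

/-- exclusion from intrinsic interior when a valid inequality is tight -/
lemma not_mem_intrinsic {x : Fin 10 → ℝ} (l : (Fin 10 → ℝ) → ℝ)
    (hC : ∀ y ∈ coneC, 0 ≤ l y)
    (hlin : ∀ s : ℝ, l (s • (x - omR) + x) = l x + s * (l x - l omR))
    (hx : l x = 0) (hom : 0 < l omR) :
    x ∉ intrinsicInterior ℝ coneC := by
  intro h
  rw [mem_intrinsicInterior] at h
  obtain ⟨y, hy, hyx⟩ := h
  have hxA : x ∈ affineSpan ℝ coneC := by rw [← hyx]; exact y.2
  have homA : omR ∈ affineSpan ℝ coneC := subset_affineSpan ℝ coneC omR_mem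
  have hpath : ∀ s : ℝ, s • (x - omR) + x ∈ affineSpan ℝ coneC := by
    intro s
    have := AffineSubspace.smul_vsub_vadd_mem (affineSpan ℝ coneC) s hxA homA hxA
    simpa [vsub_eq_sub, vadd_eq_add] using this
  let f : ℝ → (affineSpan ℝ coneC : Set (Fin 10 → ℝ)) := fun s => ⟨s • (x - omR) + x, hpath s⟩
  have hf : Continuous f := by
    apply Continuous.subtype_mk
    exact (continuous_id.smul continuous_const).add continuous_const
  have hf0 : f 0 = y := by
    apply Subtype.ext
    simp [f, hyx]
  have hnh : f ⁻¹' interior (Subtype.val ⁻¹' coneC) ∈ nhds (0 : ℝ) := by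
    apply hf.continuousAt.preimage_mem_nhds
    rw [hf0]
    exact isOpen_interior.mem_nhds hy
  obtain ⟨ε, hε, hball⟩ := Metric.mem_nhds_iff.mp hnh
  have hmem : f (ε / 2) ∈ interior (Subtype.val ⁻¹' coneC) := by
    apply hball
    simp only [Metric.mem_ball, Real.dist_eq, sub_zero]
    rw [abs_of_pos (by linarith)]
    linarith
  have hmem2 : (ε / 2) • (x - omR) + x ∈ coneC :=
    Set.mem_preimage.mp (interior_subset (s := Subtype.val ⁻¹' coneC) hmem)
  have h0 := hC _ hmem2
  rw [hlin, hx] at h0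
  nlinarith

end CBTrinode

open CBTrinode in
/-- Combinatorial Gorenstein property of the trinode conformal-block cone: the lattice
points of the relative (intrinsic) interior of `C` are exactly `ω + (C ∩ ℤ¹⁰)`, with
canonical generator `ω` in level `6`. -/
theorem stmt_9 (x : Fin 10 → ℤ) :
    ((fun t => (x t : ℝ)) ∈ intrinsicInterior ℝ coneC) ↔
      ∃ u : Fin 10 → ℤ, ((fun t => (u t : ℝ)) ∈ coneC) ∧ x = omegaCB + u := by
  obtain ⟨o0,o1,o2,o3,o4,o5,o6,o7,o8,o9⟩ := omR_eval
  obtain ⟨d0,d1,d2,d3,d4,d5,d6,d7,d8,d9⟩ :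
      omegaCB 0 = 1 ∧ omegaCB 1 = 1 ∧ omegaCB 2 = 1 ∧ omegaCB 3 = 1 ∧ omegaCB 4 = 1 ∧
      omegaCB 5 = 1 ∧ omegaCB 6 = 1 ∧ omegaCB 7 = 1 ∧ omegaCB 8 = 1 ∧ omegaCB 9 = 6 := by
    decide
  constructor
  · intro hx
    have hxC : (fun t => (x t : ℝ)) ∈ coneC := intrinsicInterior_subset hx
    have hfacts := coneC_facts hxC
    obtain ⟨e1, e2, hnn, hA, hB, hC⟩ := hfacts
    have hstrict : ∀ i : Fin 9, (0:ℝ) < x (Fin.castSucc i) := by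
      intro i
      by_contra hcon
      push_neg at hcon
      refine absurd hx (not_mem_intrinsic (fun z => z (Fin.castSucc i))
        (fun y hy => (coneC_facts hy).2.2.1 _) ?_ ?_ ?_)
      · intro s
        simp only [Pi.add_apply, Pi.smul_apply, Pi.sub_apply, smul_eq_mul]
        ring
      · exact le_antisymm hcon (hnn _)
      · show (0:ℝ) < omR (Fin.castSucc i)
        have : ∀ j : Fin 9, omegaCB (Fin.castSucc j) = 1 := by decide
        simp [omR, this]
    have g0 := hstrict 0
    have g1 := hstrict 1
    have g2 := hstrict 2
    have g3 := hstrict 3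
    have g4 := hstrict 4
    have g5 := hstrict 5
    have g6 := hstrict 6
    have g7 := hstrict 7
    have g8 := hstrict 8
    simp only [show Fin.castSucc (0:Fin 9) = (0:Fin 10) from rfl,
      show Fin.castSucc (1:Fin 9) = (1:Fin 10) from rfl,
      show Fin.castSucc (2:Fin 9) = (2:Fin 10) from rfl,
      show Fin.castSucc (3:Fin 9) = (3:Fin 10) from rfl,
      show Fin.castSucc (4:Fin 9) = (4:Fin 10) from rfl,
      show Fin.castSucc (5:Fin 9) = (5:Fin 10) from rfl,
      show Fin.castSucc (6:Fin 9) = (6:Fin 10) from rfl,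
      show Fin.castSucc (7:Fin 9) = (7:Fin 10) from rfl,
      show Fin.castSucc (8:Fin 9) = (8:Fin 10) from rfl] at g0 g1 g2 g3 g4 g5 g6 g7 g8
    have gA : (x 0:ℝ) + x 1 + x 2 + x 3 + x 8 < x 9 := by
      by_contra hcon
      push_neg at hcon
      refine absurd hx (not_mem_intrinsic (fun z => z 9 - z 0 - z 1 - z 2 - z 3 - z 8)
        (fun y hy => by have h := (coneC_facts hy).2.2.2.1; linarith) ?_ ?_ ?_)
      · intro s
        simp only [Pi.add_apply, Pi.smul_apply, Pi.sub_apply, smul_eq_mul]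
        ring
      · show (x 9:ℝ) - x 0 - x 1 - x 2 - x 3 - x 8 = 0
        linarith
      · show (0:ℝ) < omR 9 - omR 0 - omR 1 - omR 2 - omR 3 - omR 8
        rw [o9, o0, o1, o2, o3, o8]; norm_num
    have gB : (x 0:ℝ) + x 1 + x 2 + x 5 + x 4 < x 9 := by
      by_contra hcon
      push_neg at hcon
      refine absurd hx (not_mem_intrinsic (fun z => z 9 - z 0 - z 1 - z 2 - z 5 - z 4)
        (fun y hy => by have h := (coneC_facts hy).2.2.2.2.1; linarith) ?_ ?_ ?_)
      · intro s
        simp only [Pi.add_apply, Pi.smul_apply, Pi.sub_apply, smul_eq_mul]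
        ring
      · show (x 9:ℝ) - x 0 - x 1 - x 2 - x 5 - x 4 = 0
        linarith
      · show (0:ℝ) < omR 9 - omR 0 - omR 1 - omR 2 - omR 5 - omR 4
        rw [o9, o0, o1, o2, o5, o4]; norm_num
    have gC : (x 0:ℝ) + x 1 + x 2 + x 7 + x 6 < x 9 := by
      by_contra hcon
      push_neg at hcon
      refine absurd hx (not_mem_intrinsic (fun z => z 9 - z 0 - z 1 - z 2 - z 7 - z 6)
        (fun y hy => by have h := (coneC_facts hy).2.2.2.2.2; linarith) ?_ ?_ ?_)
      · intro s
        simp only [Pi.add_apply, Pi.smul_apply, Pi.sub_apply, smul_eq_mul]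
        ring
      · show (x 9:ℝ) - x 0 - x 1 - x 2 - x 7 - x 6 = 0
        linarith
      · show (0:ℝ) < omR 9 - omR 0 - omR 1 - omR 2 - omR 7 - omR 6
        rw [o9, o0, o1, o2, o7, o6]; norm_num
    have i0 : 1 ≤ x 0 := by
      have h : 0 < x 0 := by exact_mod_cast g0
      omega
    have i1 : 1 ≤ x 1 := by
      have h : 0 < x 1 := by exact_mod_cast g1
      omega
    have i2 : 1 ≤ x 2 := by
      have h : 0 < x 2 := by exact_mod_cast g2
      omega
    have i3 : 1 ≤ x 3 := by
      have h : 0 < x 3 := by exact_mod_cast g3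
      omega
    have i4 : 1 ≤ x 4 := by
      have h : 0 < x 4 := by exact_mod_cast g4
      omega
    have i5 : 1 ≤ x 5 := by
      have h : 0 < x 5 := by exact_mod_cast g5
      omega
    have i6 : 1 ≤ x 6 := by
      have h : 0 < x 6 := by exact_mod_cast g6
      omega
    have i7 : 1 ≤ x 7 := by
      have h : 0 < x 7 := by exact_mod_cast g7
      omega
    have i8 : 1 ≤ x 8 := by
      have h : 0 < x 8 := by exact_mod_cast g8
      omega
    have nA : x 0 + x 1 + x 2 + x 3 + x 8 + 1 ≤ x 9 := by
      have : x 0 + x 1 + x 2 + x 3 + x 8 < x 9 := by exact_mod_cast gA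
      omega
    have nB : x 0 + x 1 + x 2 + x 5 + x 4 + 1 ≤ x 9 := by
      have : x 0 + x 1 + x 2 + x 5 + x 4 < x 9 := by exact_mod_cast gB
      omega
    have nC : x 0 + x 1 + x 2 + x 7 + x 6 + 1 ≤ x 9 := by
      have : x 0 + x 1 + x 2 + x 7 + x 6 < x 9 := by exact_mod_cast gC
      omega
    refine ⟨fun t => x t - omegaCB t, ?_, ?_⟩
    · have cast1 : ∀ i : Fin 10, (1:ℝ) ≤ x i ↔ 1 ≤ x i := by intro i; exact_mod_cast Iff.rfl
      refine mem_coneC_of ?_ ?_ ?_ ?_ ?_ ?_ ?_ ?_ ?_ ?_ ?_ ?_ ?_ ?_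
      · push_cast [d3, d5, d6, d8]; linarith
      · push_cast [d5, d7, d8, d4]; linarith
      · push_cast [d0]; have := (cast1 0).mpr i0; linarith
      · push_cast [d1]; have := (cast1 1).mpr i1; linarith
      · push_cast [d2]; have := (cast1 2).mpr i2; linarith
      · push_cast [d3]; have := (cast1 3).mpr i3; linarith
      · push_cast [d4]; have := (cast1 4).mpr i4; linarith
      · push_cast [d5]; have := (cast1 5).mpr i5; linarith
      · push_cast [d6]; have := (cast1 6).mpr i6; linarith
      · push_cast [d7]; have := (cast1 7).mpr i7; linarith
      · push_cast [d8]; have := (cast1 8).mpr i8; linarith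
      · push_cast [d0, d1, d2, d3, d8, d9]
        have : (x 0:ℝ) + x 1 + x 2 + x 3 + x 8 + 1 ≤ x 9 := by exact_mod_cast nA
        linarith
      · push_cast [d0, d1, d2, d5, d4, d9]
        have : (x 0:ℝ) + x 1 + x 2 + x 5 + x 4 + 1 ≤ x 9 := by exact_mod_cast nB
        linarith
      · push_cast [d0, d1, d2, d7, d6, d9]
        have : (x 0:ℝ) + x 1 + x 2 + x 7 + x 6 + 1 ≤ x 9 := by exact_mod_cast nC
        linarith
    · funext t
      simp only [Pi.add_apply]
      omega
  · rintro ⟨u, huC, rfl⟩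
    have hfacts := coneC_facts huC
    obtain ⟨e1u, e2u, hnnu, hAu, hBu, hCu⟩ := hfacts
    refine mem_intrinsic_of_strict ?_ ?_ ?_ ?_ ?_ ?_ ?_ ?_ ?_ ?_ ?_ ?_ ?_ ?_
    · simp only [Pi.add_apply]; push_cast [d3, d5, d6, d8]; linarith
    · simp only [Pi.add_apply]; push_cast [d5, d7, d8, d4]; linarith
    · simp only [Pi.add_apply]; push_cast [d0]; linarith [hnnu 0]
    · simp only [Pi.add_apply]; push_cast [d1]; linarith [hnnu 1]
    · simp only [Pi.add_apply]; push_cast [d2]; linarith [hnnu 2]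
    · simp only [Pi.add_apply]; push_cast [d3]; linarith [hnnu 3]
    · simp only [Pi.add_apply]; push_cast [d4]; linarith [hnnu 4]
    · simp only [Pi.add_apply]; push_cast [d5]; linarith [hnnu 5]
    · simp only [Pi.add_apply]; push_cast [d6]; linarith [hnnu 6]
    · simp only [Pi.add_apply]; push_cast [d7]; linarith [hnnu 7]
    · simp only [Pi.add_apply]; push_cast [d8]; linarith [hnnu 8]
    · simp only [Pi.add_apply]; push_cast [d0, d1, d2, d3, d8, d9]; linarith
    · simp only [Pi.add_apply]; push_cast [d0, d1, d2, d5, d4, d9]; linarith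
    · simp only [Pi.add_apply]; push_cast [d0, d1, d2, d7, d6, d9]; linarith
end

section
/- Let C ⊆ ℝⁿ be a convex cone (a convex set containing 0 and closed under multiplication by nonnegative real scalars), and let ω ∈ ℤⁿ be such that relint(C) ∩ ℤⁿ = {ω + u : u ∈ C ∩ ℤⁿ}, where relint denotes the intrinsic (relative) interior. Let H ⊆ ℝⁿ be a linear subspace with ω ∈ H. Then relint(C ∩ H) ∩ ℤⁿ = {ω + u : u ∈ C ∩ H ∩ ℤⁿ}. -/
open Set

variable {E : Type*} [NormedAddCommGroup E] [NormedSpace ℝ E]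

lemma mem_relint_iff (s : Set E) (x : E) :
    x ∈ intrinsicInterior ℝ s ↔ x ∈ affineSpan ℝ s ∧
      ∃ U : Set E, IsOpen U ∧ x ∈ U ∧ U ∩ (affineSpan ℝ s : Set E) ⊆ s := by
  constructor
  · rintro ⟨y, hy, rfl⟩
    refine ⟨y.2, ?_⟩
    rw [mem_interior] at hy
    obtain ⟨O, hOs, hOopen, hyO⟩ := hy
    obtain ⟨U, hU, rfl⟩ := isOpen_induced_iff.1 hOopen
    exact ⟨U, hU, hyO, fun z hz => hOs (show (⟨z, hz.2⟩ : affineSpan ℝ s) ∈ _ from hz.1)⟩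
  · rintro ⟨hx, U, hU, hxU, hUs⟩
    refine ⟨⟨x, hx⟩, ?_, rfl⟩
    rw [mem_interior]
    exact ⟨Subtype.val ⁻¹' U, fun z hz => hUs ⟨hz, z.2⟩, hU.preimage continuous_subtype_val, hxU⟩

lemma span_inter_subset_H {C : Set E} {H : Submodule ℝ E} :
    (affineSpan ℝ (C ∩ (H : Set E)) : Set E) ⊆ (H : Set E) := by
  intro z hz
  have h := affineSpan_le.2
    (show C ∩ (H : Set E) ⊆ (H.toAffineSubspace : Set E) from fun w hw => hw.2)
  exact h hz

lemma mem_relint_inter {C : Set E} {H : Submodule ℝ E} {x : E}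
    (hx : x ∈ intrinsicInterior ℝ C) (hxH : x ∈ H) :
    x ∈ intrinsicInterior ℝ (C ∩ (H : Set E)) := by
  rw [mem_relint_iff] at hx ⊢
  obtain ⟨hsp, U, hU, hxU, hUs⟩ := hx
  have hxC : x ∈ C := hUs ⟨hxU, hsp⟩
  have hspan1 : (affineSpan ℝ (C ∩ (H : Set E)) : Set E) ⊆ (affineSpan ℝ C : Set E) :=
    affineSpan_mono ℝ inter_subset_left
  refine ⟨subset_affineSpan ℝ _ ⟨hxC, hxH⟩, U, hU, hxU,
    fun z hz => ⟨hUs ⟨hz.1, hspan1 hz.2⟩, span_inter_subset_H hz.2⟩⟩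

lemma relint_prolong {s : Set E} {x y : E} (hx : x ∈ intrinsicInterior ℝ s) (hy : y ∈ s) :
    ∃ μ : ℝ, 0 < μ ∧ x + μ • (x - y) ∈ s := by
  rw [mem_relint_iff] at hx
  obtain ⟨hsp, U, hU, hxU, hUs⟩ := hx
  obtain ⟨δ, hδ, hball⟩ := Metric.isOpen_iff.1 hU x hxU
  set μ := δ / (2 * (‖x - y‖ + 1)) with hμdef
  have hμ : 0 < μ := by positivity
  refine ⟨μ, hμ, hUs ⟨hball ?_, ?_⟩⟩
  · rw [Metric.mem_ball, dist_eq_norm]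
    have h1 : x + μ • (x - y) - x = μ • (x - y) := by abel
    rw [h1, norm_smul, Real.norm_eq_abs, abs_of_pos hμ]
    have h2 : 0 ≤ ‖x - y‖ := norm_nonneg _
    have h3 : μ * (‖x - y‖ + 1) = δ / 2 := by
      rw [hμdef]; field_simp
    nlinarith
  · have hys : y ∈ affineSpan ℝ s := subset_affineSpan ℝ s hy
    have h := AffineSubspace.smul_vsub_vadd_mem (affineSpan ℝ s) μ hsp hys hsp
    have he : μ • (x -ᵥ y) +ᵥ x = x + μ • (x - y) := by
      simp [vsub_eq_sub, vadd_eq_add]; abel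
    rw [he] at h
    exact h

lemma relint_combo {s : Set E} (hconv : Convex ℝ s) {v z : E}
    (hv : v ∈ intrinsicInterior ℝ s) (hz : z ∈ s) {a b : ℝ}
    (ha : 0 < a) (hb : 0 < b) (hab : a + b = 1) :
    a • v + b • z ∈ intrinsicInterior ℝ s := by
  rw [mem_relint_iff] at hv ⊢
  obtain ⟨hsp, U, hU, hvU, hUs⟩ := hv
  have hvs : v ∈ s := hUs ⟨hvU, hsp⟩
  have hxs : a • v + b • z ∈ s := hconv hvs hz ha.le hb.le hab
  refine ⟨subset_affineSpan ℝ s hxs, (fun w => a⁻¹ • (w - b • z)) ⁻¹' U,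
    hU.preimage ((continuous_id.sub continuous_const).const_smul a⁻¹), ?_, ?_⟩
  · show a⁻¹ • (a • v + b • z - b • z) ∈ U
    have : a⁻¹ • (a • v + b • z - b • z) = v := by
      rw [add_sub_cancel_right, smul_smul, inv_mul_cancel₀ ha.ne', one_smul]
    rw [this]; exact hvU
  · rintro w ⟨hwU, hwsp⟩
    have hzs : z ∈ affineSpan ℝ s := subset_affineSpan ℝ s hz
    have hvmem : a⁻¹ • (w - b • z) ∈ affineSpan ℝ s := by
      have h := AffineSubspace.smul_vsub_vadd_mem (affineSpan ℝ s) a⁻¹ hwsp hzs hzs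
      have he : a⁻¹ • (w -ᵥ z) +ᵥ z = a⁻¹ • (w - b • z) := by
        simp only [vsub_eq_sub, vadd_eq_add]
        match_scalars <;> field_simp <;> linarith
      rwa [he] at h
    have hvC : a⁻¹ • (w - b • z) ∈ s := hUs ⟨hwU, hvmem⟩
    have hw : w = a • (a⁻¹ • (w - b • z)) + b • z := by
      rw [smul_smul, mul_inv_cancel₀ ha.ne', one_smul, sub_add_cancel]
    rw [hw]
    exact hconv hvC hz ha.le hb.le hab

/-- Intersecting a Gorenstein cone with a linear subspace containing the canonical
generator preserves the combinatorial Gorenstein property: if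
`relint(C) ∩ ℤⁿ = ω + (C ∩ ℤⁿ)` and `ω ∈ H`, then
`relint(C ∩ H) ∩ ℤⁿ = ω + (C ∩ H ∩ ℤⁿ)`. -/
theorem stmt_10 (n : ℕ) (C : Set (Fin n → ℝ))
    (hconv : Convex ℝ C) (h0 : (0 : Fin n → ℝ) ∈ C)
    (hcone : ∀ c : ℝ, 0 ≤ c → ∀ x ∈ C, c • x ∈ C)
    (ω : Fin n → ℤ)
    (hGor : ∀ x : Fin n → ℤ,
      ((fun t => (x t : ℝ)) ∈ intrinsicInterior ℝ C) ↔
        ∃ u : Fin n → ℤ, ((fun t => (u t : ℝ)) ∈ C) ∧ x = ω + u)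
    (H : Submodule ℝ (Fin n → ℝ))
    (hω : (fun t => (ω t : ℝ)) ∈ H) :
    ∀ x : Fin n → ℤ,
      ((fun t => (x t : ℝ)) ∈ intrinsicInterior ℝ (C ∩ (H : Set (Fin n → ℝ)))) ↔
        ∃ u : Fin n → ℤ,
          ((fun t => (u t : ℝ)) ∈ C ∩ (H : Set (Fin n → ℝ))) ∧ x = ω + u := by
  intro x
  set ω' : Fin n → ℝ := fun t => (ω t : ℝ) with hω'
  have hω0 : ω' ∈ intrinsicInterior ℝ C := by
    refine (hGor ω).2 ⟨0, ?_, by simp⟩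
    have : (fun t => ((0 : Fin n → ℤ) t : ℝ)) = (0 : Fin n → ℝ) := by funext t; simp
    rw [this]; exact h0
  have hωC : ω' ∈ C := intrinsicInterior_subset hω0
  set x' : Fin n → ℝ := fun t => (x t : ℝ) with hx'
  constructor
  · intro hx
    have hxH : x' ∈ H := span_inter_subset_H ((mem_relint_iff _ _).1 hx).1
    obtain ⟨μ, hμ, hzmem⟩ := relint_prolong hx ⟨hωC, hω⟩
    set z := x' + μ • (x' - ω') with hzdef
    have h1μ : (0 : ℝ) < 1 + μ := by linarith
    have hxrel : x' ∈ intrinsicInterior ℝ C := by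
      have hc := relint_combo hconv hω0 hzmem.1 (a := μ / (1 + μ)) (b := 1 / (1 + μ))
        (by positivity) (by positivity) (by field_simp; ring)
      have he : (μ / (1 + μ)) • ω' + (1 / (1 + μ)) • z = x' := by
        rw [hzdef]; match_scalars <;> (field_simp; try ring)
      rwa [he] at hc
    obtain ⟨u, huC, hxu⟩ := (hGor x).1 hxrel
    refine ⟨u, ⟨huC, ?_⟩, hxu⟩
    have he : (fun t => (u t : ℝ)) = x' - ω' := by
      funext t
      have := congrFun hxu t
      simp only [Pi.add_apply] at this
      simp [hx', hω', this]
    rw [he]; exact H.sub_mem hxH hω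
  · rintro ⟨u, ⟨huC, huH⟩, rfl⟩
    have hmem : (fun t => ((ω + u) t : ℝ)) ∈ intrinsicInterior ℝ C := (hGor _).2 ⟨u, huC, rfl⟩
    have hH : (fun t => ((ω + u) t : ℝ)) ∈ H := by
      have he : (fun t => ((ω + u) t : ℝ)) = ω' + (fun t => (u t : ℝ)) := by
        funext t; simp [hω']
      rw [he]; exact H.add_mem hω huH
    exact mem_relint_inter hmem hH
end

section
/- Let D = {(x, L) ∈ C ∩ ℤ¹⁰ : ∂₂(x) = σ(∂₃(x))}, where σ(p,q) = (q,p); explicitly, D consists of the lattice points of C whose ℤ⁹-part x satisfies b₁+b₂ = c₃+a₁ and b₃+c₁ = c₁+c₂. Then D is generated as an additive monoid by its elements whose level coordinate L is 1, 2, or 3; i.e., every element of D is a finite sum of elements of D of level at most 3. -/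
/-- The set `D = {(x, L) ∈ C ∩ ℤ¹⁰ : ∂₂(x) = σ(∂₃(x))}`, i.e. the lattice points of `C`
whose `ℤ⁹`-part satisfies `b₁+b₂ = c₃+a₁` and `b₃+c₁ = c₁+c₂` (the semigroup
`BZ*₍₁,₁₎` of the once-punctured genus-one graph). -/
def Dgenus1 : Set (Fin 10 → ℤ) :=
  {z | ((fun t => (z t : ℝ)) ∈ coneC) ∧ z 1 + z 5 = z 8 + z 0 ∧ z 6 + z 2 = z 2 + z 7}

/- ### Auxiliary material -/

/-- Evaluation of a generic nonnegative combination of the nine generators. -/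
lemma cb_sum_eval (c : Fin 9 → ℝ) : ∑ i : Fin 9, c i • cbGensR i =
    ![c 8, c 6, c 7, c 1 + c 3, c 2 + c 5, c 1 + c 4, c 2 + c 3, c 1 + c 5, c 2 + c 4,
      c 0 + (c 1 + (c 2 + (c 3 + (c 4 + (c 5 + (c 6 + (c 7 + c 8)))))))] := by
  funext t
  fin_cases t <;> norm_num [cbGensR, cbGens, Fin.sum_univ_succ] <;> rfl

/-- Membership in `Dgenus1` from an explicit coefficient vector. -/
lemma memD_of_wit (v : Fin 10 → ℤ) (w : Fin 9 → ℝ) (hw : ∀ i, 0 ≤ w i)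
    (heq : (fun t => (v t : ℝ)) = ∑ i : Fin 9, w i • cbGensR i)
    (h1 : v 1 + v 5 = v 8 + v 0) (h2 : v 6 + v 2 = v 2 + v 7) : v ∈ Dgenus1 :=
  ⟨⟨w, hw, heq⟩, h1, h2⟩

lemma memX : (![0,0,0,0,0,0,0,0,0,1] : Fin 10 → ℤ) ∈ Dgenus1 := by
  refine memD_of_wit _ ![1,0,0,0,0,0,0,0,0] (fun i => by fin_cases i <;> norm_num) ?_
    (by decide) (by decide)
  funext t; fin_cases t <;> norm_num [cbGensR, cbGens, Fin.sum_univ_succ]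

lemma mem23 : (![0,0,0,0,0,1,0,0,1,1] : Fin 10 → ℤ) ∈ Dgenus1 := by
  refine memD_of_wit _ ![0,0,0,0,1,0,0,0,0] (fun i => by fin_cases i <;> norm_num) ?_
    (by decide) (by decide)
  funext t; fin_cases t <;> norm_num [cbGensR, cbGens, Fin.sum_univ_succ]

lemma mem32 : (![0,0,1,0,0,0,0,0,0,1] : Fin 10 → ℤ) ∈ Dgenus1 := by
  refine memD_of_wit _ ![0,0,0,0,0,0,0,1,0] (fun i => by fin_cases i <;> norm_num) ?_
    (by decide) (by decide)
  funext t; fin_cases t <;> norm_num [cbGensR, cbGens, Fin.sum_univ_succ]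

lemma memST : (![0,0,0,1,1,1,1,1,1,2] : Fin 10 → ℤ) ∈ Dgenus1 := by
  refine memD_of_wit _ ![0,1,1,0,0,0,0,0,0] (fun i => by fin_cases i <;> norm_num) ?_
    (by decide) (by decide)
  funext t; fin_cases t <;> norm_num [cbGensR, cbGens, Fin.sum_univ_succ]

lemma memPP : (![0,0,0,1,1,0,1,1,0,2] : Fin 10 → ℤ) ∈ Dgenus1 := by
  refine memD_of_wit _ ![0,0,0,1,0,1,0,0,0] (fun i => by fin_cases i <;> norm_num) ?_
    (by decide) (by decide)
  funext t; fin_cases t <;> norm_num [cbGensR, cbGens, Fin.sum_univ_succ]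

lemma memQQ : (![1,1,0,0,0,0,0,0,0,2] : Fin 10 → ℤ) ∈ Dgenus1 := by
  refine memD_of_wit _ ![0,0,0,0,0,0,1,0,1] (fun i => by fin_cases i <;> norm_num) ?_
    (by decide) (by decide)
  funext t; fin_cases t <;> norm_num [cbGensR, cbGens, Fin.sum_univ_succ]

lemma memT3 : (![0,1,0,0,2,0,1,1,1,3] : Fin 10 → ℤ) ∈ Dgenus1 := by
  refine memD_of_wit _ ![0,0,1,0,0,1,1,0,0] (fun i => by fin_cases i <;> norm_num) ?_
    (by decide) (by decide)
  funext t; fin_cases t <;> norm_num [cbGensR, cbGens, Fin.sum_univ_succ]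

lemma memS3 : (![1,0,0,2,0,1,1,1,0,3] : Fin 10 → ℤ) ∈ Dgenus1 := by
  refine memD_of_wit _ ![0,1,0,1,0,0,0,0,1] (fun i => by fin_cases i <;> norm_num) ?_
    (by decide) (by decide)
  funext t; fin_cases t <;> norm_num [cbGensR, cbGens, Fin.sum_univ_succ]

/-- Evaluation of a generic natural combination of the eight low-level elements. -/
lemma comb_eval (x b c' s p q t3 s3 : ℕ) :
    x • (![0,0,0,0,0,0,0,0,0,1] : Fin 10 → ℤ)
      + b • (![0,0,0,0,0,1,0,0,1,1] : Fin 10 → ℤ)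
      + c' • (![0,0,1,0,0,0,0,0,0,1] : Fin 10 → ℤ)
      + s • (![0,0,0,1,1,1,1,1,1,2] : Fin 10 → ℤ)
      + p • (![0,0,0,1,1,0,1,1,0,2] : Fin 10 → ℤ)
      + q • (![1,1,0,0,0,0,0,0,0,2] : Fin 10 → ℤ)
      + t3 • (![0,1,0,0,2,0,1,1,1,3] : Fin 10 → ℤ)
      + s3 • (![1,0,0,2,0,1,1,1,0,3] : Fin 10 → ℤ)
    = ![(q:ℤ) + s3, q + t3, c', s + p + 2*s3, s + p + 2*t3, b + s + s3,
        s + p + t3 + s3, s + p + t3 + s3, b + s + t3,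
        x + b + c' + 2*s + 2*p + 2*q + 3*t3 + 3*s3] := by
  funext t
  fin_cases t <;> norm_num [Fin.sum_univ_succ] <;> ring

/-- Decomposition of `d` from its ten coordinate identities. -/
lemma keyOf (d : Fin 10 → ℤ) (x b c' s p q t3 s3 : ℕ)
    (e0 : d 0 = (q:ℤ) + s3) (e1 : d 1 = (q:ℤ) + t3) (e2 : d 2 = (c':ℤ))
    (e3 : d 3 = (s:ℤ) + p + 2*s3) (e4 : d 4 = (s:ℤ) + p + 2*t3)
    (e5 : d 5 = (b:ℤ) + s + s3) (e6 : d 6 = (s:ℤ) + p + t3 + s3)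
    (e7 : d 7 = (s:ℤ) + p + t3 + s3) (e8 : d 8 = (b:ℤ) + s + t3)
    (e9 : d 9 = (x:ℤ) + b + c' + 2*s + 2*p + 2*q + 3*t3 + 3*s3) :
    d = x • (![0,0,0,0,0,0,0,0,0,1] : Fin 10 → ℤ)
      + b • (![0,0,0,0,0,1,0,0,1,1] : Fin 10 → ℤ)
      + c' • (![0,0,1,0,0,0,0,0,0,1] : Fin 10 → ℤ)
      + s • (![0,0,0,1,1,1,1,1,1,2] : Fin 10 → ℤ)
      + p • (![0,0,0,1,1,0,1,1,0,2] : Fin 10 → ℤ)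
      + q • (![1,1,0,0,0,0,0,0,0,2] : Fin 10 → ℤ)
      + t3 • (![0,1,0,0,2,0,1,1,1,3] : Fin 10 → ℤ)
      + s3 • (![1,0,0,2,0,1,1,1,0,3] : Fin 10 → ℤ) := by
  rw [comb_eval]
  have hdvec : d = ![d 0, d 1, d 2, d 3, d 4, d 5, d 6, d 7, d 8, d 9] := by
    funext t; fin_cases t <;> rfl
  conv_lhs => rw [hdvec]
  exact congr_arg₂ _ e0 (congr_arg₂ _ e1 (congr_arg₂ _ e2 (congr_arg₂ _ e3
    (congr_arg₂ _ e4 (congr_arg₂ _ e5 (congr_arg₂ _ e6 (congr_arg₂ _ e7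
    (congr_arg₂ _ e8 (congr_arg₂ _ e9 rfl)))))))))

/-- Any natural combination of the eight low-level elements lies in the closure. -/
lemma buildMem (x b c' s p q t3 s3 : ℕ) :
    x • (![0,0,0,0,0,0,0,0,0,1] : Fin 10 → ℤ)
      + b • (![0,0,0,0,0,1,0,0,1,1] : Fin 10 → ℤ)
      + c' • (![0,0,1,0,0,0,0,0,0,1] : Fin 10 → ℤ)
      + s • (![0,0,0,1,1,1,1,1,1,2] : Fin 10 → ℤ)
      + p • (![0,0,0,1,1,0,1,1,0,2] : Fin 10 → ℤ)
      + q • (![1,1,0,0,0,0,0,0,0,2] : Fin 10 → ℤ)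
      + t3 • (![0,1,0,0,2,0,1,1,1,3] : Fin 10 → ℤ)
      + s3 • (![1,0,0,2,0,1,1,1,0,3] : Fin 10 → ℤ)
    ∈ AddSubmonoid.closure
      {z : Fin 10 → ℤ | z ∈ Dgenus1 ∧ (z 9 = 1 ∨ z 9 = 2 ∨ z 9 = 3)} := by
  have sub : ∀ v : Fin 10 → ℤ, v ∈ Dgenus1 → (v 9 = 1 ∨ v 9 = 2 ∨ v 9 = 3) →
      v ∈ AddSubmonoid.closure
        {z : Fin 10 → ℤ | z ∈ Dgenus1 ∧ (z 9 = 1 ∨ z 9 = 2 ∨ z 9 = 3)} :=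
    fun v hv hl => AddSubmonoid.subset_closure ⟨hv, hl⟩
  exact add_mem (add_mem (add_mem (add_mem (add_mem (add_mem (add_mem
    (nsmul_mem (sub _ memX (by decide)) x)
    (nsmul_mem (sub _ mem23 (by decide)) b))
    (nsmul_mem (sub _ mem32 (by decide)) c'))
    (nsmul_mem (sub _ memST (by decide)) s))
    (nsmul_mem (sub _ memPP (by decide)) p))
    (nsmul_mem (sub _ memQQ (by decide)) q))
    (nsmul_mem (sub _ memT3 (by decide)) t3))
    (nsmul_mem (sub _ memS3 (by decide)) s3)

/-- The monoid `D` is generated by its elements of level `1`, `2` or `3`. -/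
theorem stmt_12 (d : Fin 10 → ℤ) (hd : d ∈ Dgenus1) :
    d ∈ AddSubmonoid.closure
      {z : Fin 10 → ℤ | z ∈ Dgenus1 ∧ (z 9 = 1 ∨ z 9 = 2 ∨ z 9 = 3)} := by
  obtain ⟨⟨c, P, hceq⟩, hD1, hD2⟩ := hd
  rw [cb_sum_eval] at hceq
  -- coordinate equations over ℝ
  have E0 : (d 0 : ℝ) = c 8 := congrFun hceq 0
  have E1 : (d 1 : ℝ) = c 6 := congrFun hceq 1
  have E2 : (d 2 : ℝ) = c 7 := congrFun hceq 2
  have E3 : (d 3 : ℝ) = c 1 + c 3 := congrFun hceq 3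
  have E4 : (d 4 : ℝ) = c 2 + c 5 := congrFun hceq 4
  have E5 : (d 5 : ℝ) = c 1 + c 4 := congrFun hceq 5
  have E6 : (d 6 : ℝ) = c 2 + c 3 := congrFun hceq 6
  have E7 : (d 7 : ℝ) = c 1 + c 5 := congrFun hceq 7
  have E8 : (d 8 : ℝ) = c 2 + c 4 := congrFun hceq 8
  have E9 : (d 9 : ℝ) =
      c 0 + (c 1 + (c 2 + (c 3 + (c 4 + (c 5 + (c 6 + (c 7 + c 8))))))) := congrFun hceq 9
  -- integer facts
  have h0 : 0 ≤ d 0 := by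
    have : (0:ℝ) ≤ (d 0 : ℝ) := by rw [E0]; exact P 8
    exact_mod_cast this
  have h1 : 0 ≤ d 1 := by
    have : (0:ℝ) ≤ (d 1 : ℝ) := by rw [E1]; exact P 6
    exact_mod_cast this
  have h2 : 0 ≤ d 2 := by
    have : (0:ℝ) ≤ (d 2 : ℝ) := by rw [E2]; exact P 7
    exact_mod_cast this
  have h3 : 0 ≤ d 3 := by
    have : (0:ℝ) ≤ (d 3 : ℝ) := by rw [E3]; exact add_nonneg (P 1) (P 3)
    exact_mod_cast this
  have h4 : 0 ≤ d 4 := by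
    have : (0:ℝ) ≤ (d 4 : ℝ) := by rw [E4]; exact add_nonneg (P 2) (P 5)
    exact_mod_cast this
  have h5 : 0 ≤ d 5 := by
    have : (0:ℝ) ≤ (d 5 : ℝ) := by rw [E5]; exact add_nonneg (P 1) (P 4)
    exact_mod_cast this
  have h6 : 0 ≤ d 6 := by
    have : (0:ℝ) ≤ (d 6 : ℝ) := by rw [E6]; exact add_nonneg (P 2) (P 3)
    exact_mod_cast this
  have h7 : 0 ≤ d 7 := by
    have : (0:ℝ) ≤ (d 7 : ℝ) := by rw [E7]; exact add_nonneg (P 1) (P 5)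
    exact_mod_cast this
  have h8 : 0 ≤ d 8 := by
    have : (0:ℝ) ≤ (d 8 : ℝ) := by rw [E8]; exact add_nonneg (P 2) (P 4)
    exact_mod_cast this
  have hA : d 4 + d 3 = d 6 + d 7 := by
    have : ((d 4 : ℝ)) + (d 3 : ℝ) = (d 6 : ℝ) + (d 7 : ℝ) := by
      rw [E3, E4, E6, E7]; ring
    exact_mod_cast this
  have hB : d 8 + d 3 = d 5 + d 6 := by
    have : ((d 8 : ℝ)) + (d 3 : ℝ) = (d 5 : ℝ) + (d 6 : ℝ) := by
      rw [E3, E5, E6, E8]; ring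
    exact_mod_cast this
  have i3 : d 0 + d 1 + d 2 + d 5 + d 6 + d 7 ≤ d 9 + d 3 := by
    have : ((d 0:ℝ)) + d 1 + d 2 + d 5 + d 6 + d 7 ≤ (d 9:ℝ) + d 3 := by
      rw [E0, E1, E2, E3, E5, E6, E7, E9]; linarith [P 0, P 3]
    exact_mod_cast this
  have i5 : d 0 + d 1 + d 2 + d 5 + d 6 + d 7 ≤ d 9 + d 5 := by
    have : ((d 0:ℝ)) + d 1 + d 2 + d 5 + d 6 + d 7 ≤ (d 9:ℝ) + d 5 := by
      rw [E0, E1, E2, E5, E6, E7, E9]; linarith [P 0, P 4]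
    exact_mod_cast this
  have i7 : d 0 + d 1 + d 2 + d 5 + d 6 + d 7 ≤ d 9 + d 7 := by
    have : ((d 0:ℝ)) + d 1 + d 2 + d 5 + d 6 + d 7 ≤ (d 9:ℝ) + d 7 := by
      rw [E0, E1, E2, E5, E6, E7, E9]; linarith [P 0, P 5]
    exact_mod_cast this
  clear E0 E1 E2 E3 E4 E5 E6 E7 E8 E9 hceq P
  -- minimum of the three middle coordinates, with its characterizing facts
  obtain ⟨m, hm3, hm5, hm7, hmc⟩ :
      ∃ m : ℤ, m ≤ d 3 ∧ m ≤ d 5 ∧ m ≤ d 7 ∧ (m = d 3 ∨ m = d 5 ∨ m = d 7) :=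
    ⟨min (d 3) (min (d 5) (d 7)), by omega, by omega, by omega, by omega⟩
  obtain ⟨x, hx⟩ : ∃ n : ℕ, (n:ℤ) = d 9 - (d 0 + d 1 + d 2 + d 5 + d 6 + d 7) + m :=
    ⟨_, Int.toNat_of_nonneg (by omega)⟩
  obtain ⟨b, hb⟩ : ∃ n : ℕ, (n:ℤ) = d 5 - m := ⟨_, Int.toNat_of_nonneg (by omega)⟩
  obtain ⟨c', hc'⟩ : ∃ n : ℕ, (n:ℤ) = d 2 := ⟨_, Int.toNat_of_nonneg (by omega)⟩
  rcases le_total (d 3) (d 6) with hcase | hcase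
  · -- δ = d 6 - d 3 ≥ 0
    obtain ⟨s, hs⟩ : ∃ n : ℕ, (n:ℤ) = m := ⟨_, Int.toNat_of_nonneg (by omega)⟩
    obtain ⟨p, hp⟩ : ∃ n : ℕ, (n:ℤ) = d 3 - m := ⟨_, Int.toNat_of_nonneg (by omega)⟩
    obtain ⟨q, hq⟩ : ∃ n : ℕ, (n:ℤ) = d 0 := ⟨_, Int.toNat_of_nonneg (by omega)⟩
    obtain ⟨t3, ht3⟩ : ∃ n : ℕ, (n:ℤ) = d 6 - d 3 := ⟨_, Int.toNat_of_nonneg (by omega)⟩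
    have key := keyOf d x b c' s p q t3 0
      (by push_cast; omega) (by push_cast; omega) (by push_cast; omega)
      (by push_cast; omega) (by push_cast; omega) (by push_cast; omega)
      (by push_cast; omega) (by push_cast; omega) (by push_cast; omega)
      (by push_cast; omega)
    rw [key]
    exact buildMem _ _ _ _ _ _ _ _
  · -- δ = d 6 - d 3 ≤ 0
    obtain ⟨s, hs⟩ : ∃ n : ℕ, (n:ℤ) = m + d 6 - d 3 := ⟨_, Int.toNat_of_nonneg (by omega)⟩
    obtain ⟨p, hp⟩ : ∃ n : ℕ, (n:ℤ) = d 6 - m := ⟨_, Int.toNat_of_nonneg (by omega)⟩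
    obtain ⟨q, hq⟩ : ∃ n : ℕ, (n:ℤ) = d 1 := ⟨_, Int.toNat_of_nonneg (by omega)⟩
    obtain ⟨s3, hs3⟩ : ∃ n : ℕ, (n:ℤ) = d 3 - d 6 := ⟨_, Int.toNat_of_nonneg (by omega)⟩
    have key := keyOf d x b c' s p q 0 s3
      (by push_cast; omega) (by push_cast; omega) (by push_cast; omega)
      (by push_cast; omega) (by push_cast; omega) (by push_cast; omega)
      (by push_cast; omega) (by push_cast; omega) (by push_cast; omega)
      (by push_cast; omega)
    rw [key]
    exact buildMem _ _ _ _ _ _ _ _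
end
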